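/- arXiv:2512.21413 — 3 statements merged into one kernel-verified Lean document; each statement's English description precedes it below -/
import Mathlib

section
/- Let n ∈ ℕ and let r1, r2, d ∈ ℂ satisfy r1 + r2 + 2d + 2 = k with k an even integer, k ≥ 6, Re(r1) ≥ 0, Re(r2) ≥ 0 and Re(d) > 0. Then there exists a constant C > 0 such that |Q(n1, n−n1)| ≤ C·|n1|^{−Re(d)−1} for all n1 ∈ ℤ∖{0, n}; consequently the family (Q(n1, n−n1)·σ_{−r1}(n1)·σ_{−r2}(n−n1)) indexed by n1 ∈ ℤ∖{0, n} is absolutely summable. -/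
open Filter Topology MeasureTheory Real

noncomputable section

/-- Divisor function `σ_a(x) = ∑_{d ∣ x, d > 0} d^a` for `a : ℂ` and a nonzero integer `x`. -/
def sigmaC (a : ℂ) (x : ℤ) : ℂ := ∑ d ∈ x.natAbs.divisors, (d : ℂ) ^ a

/-- Euler integral representation of the principal branch of
`₂F₁(d+1, d+r1+1; k; z)` with `k = 2d+2+r1+r2`. -/
def F (r1 r2 d : ℂ) (z : ℂ) : ℂ :=
  Complex.Gamma (2 * d + 2 + r1 + r2) /
      (Complex.Gamma (d + r1 + 1) * Complex.Gamma (d + r2 + 1)) *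
    ∫ t in (0:ℝ)..1, (t : ℂ) ^ (d + r1) * ((1 : ℂ) - t) ^ (d + r2) *
      ((1 : ℂ) - t * z) ^ (-(d + 1))

/-- `G₊(x) = lim_{ε→0+} F(x + iε)`. -/
def Gp (r1 r2 d : ℂ) (x : ℝ) : ℂ :=
  limUnder (𝓝[>] (0:ℝ)) (fun ε : ℝ => F r1 r2 d ((x : ℂ) + ε * Complex.I))

/-- `G₋(x) = lim_{ε→0+} F(x - iε)`. -/
def Gm (r1 r2 d : ℂ) (x : ℝ) : ℂ :=
  limUnder (𝓝[>] (0:ℝ)) (fun ε : ℝ => F r1 r2 d ((x : ℂ) - ε * Complex.I))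

/-- The convolution weight `Q(n1, n2)` (with `n2 = n - n1`), defined by
`Γ(k)·|n1/n|^{d+1}·Q(n1,n2) = (G₊ - G₋)·i^{k+1}·sin(πr2/2) + (G₊ + G₋)·c(n1)`. -/
def Q (k : ℕ) (r1 r2 d : ℂ) (n : ℕ) (n1 : ℤ) : ℂ :=
  ((Gp r1 r2 d ((n : ℝ) / (n1 : ℝ)) - Gm r1 r2 d ((n : ℝ) / (n1 : ℝ))) *
      Complex.I ^ (k + 1) * Complex.sin ((π : ℂ) * r2 / 2) +
    (Gp r1 r2 d ((n : ℝ) / (n1 : ℝ)) + Gm r1 r2 d ((n : ℝ) / (n1 : ℝ))) *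
      (if 0 < n1 then Complex.I ^ k * Complex.cos ((π : ℂ) * r2 / 2)
        else Complex.cos ((π : ℂ) * r1 / 2))) /
    (Complex.Gamma (2 * d + 2 + r1 + r2) * ((|(n1 : ℝ) / (n : ℝ)| : ℝ) : ℂ) ^ (d + 1))


lemma aux_cpow_bound (d : ℂ) (hd : 0 ≤ d.re) {w : ℂ} {δ : ℝ} (hδ : 0 < δ) (hw : δ ≤ w.re) :
    ‖w ^ (-(d+1))‖ ≤ δ ^ (-(d.re+1)) * Real.exp (π * |d.im|) := by
  have hw0 : w ≠ 0 := by
    intro h; rw [h] at hw; simp at hw; linarith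
  have habs : δ ≤ ‖w‖ := le_trans hw (Complex.re_le_norm w)
  rw [show ‖w ^ (-(d+1))‖ = ‖(w ^ (-(d+1)))‖ from rfl,
    Complex.norm_cpow_of_ne_zero hw0]
  have h1 : ‖w‖ ^ (-(d+1)).re ≤ δ ^ (-(d.re+1)) := by
    have h : (-(d+1)).re = -(d.re+1) := by simp
    rw [h]
    exact Real.rpow_le_rpow_of_nonpos hδ habs (by linarith)
  have h2 : Real.exp (-(π * |d.im|)) ≤ Real.exp (w.arg * (-(d+1)).im) := by
    apply Real.exp_le_exp.2
    have h : (-(d+1)).im = -d.im := by simp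
    rw [h]
    have h3 : |w.arg * (-d.im)| ≤ π * |d.im| := by
      rw [abs_mul, abs_neg]
      exact mul_le_mul_of_nonneg_right (Complex.abs_arg_le_pi w) (abs_nonneg _)
    linarith [(abs_le.1 h3).1]
  calc ‖w‖ ^ (-(d+1)).re / Real.exp (w.arg * (-(d+1)).im)
      ≤ δ ^ (-(d.re+1)) / Real.exp (-(π * |d.im|)) :=
        div_le_div₀ (by positivity) h1 (Real.exp_pos _) h2
    _ = δ ^ (-(d.re+1)) * Real.exp (π * |d.im|) := by
        rw [Real.exp_neg, div_inv_eq_mul]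


lemma aux_integrand_bound (r1 r2 d : ℂ) (h1 : 0 ≤ r1.re) (h2 : 0 ≤ r2.re) (hd : 0 < d.re)
    {δ : ℝ} (hδ : 0 < δ) (hδ1 : δ ≤ 1) {z : ℂ} (hz : z.re ≤ 1 - δ) {t : ℝ}
    (ht : t ∈ Set.uIoc (0:ℝ) 1) :
    ‖(t:ℂ) ^ (d + r1) * ((1:ℂ) - t) ^ (d + r2) * ((1:ℂ) - t*z) ^ (-(d+1))‖ ≤
      δ ^ (-(d.re+1)) * Real.exp (π * |d.im|) := by
  rw [Set.uIoc_of_le zero_le_one] at ht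
  obtain ⟨ht0, ht1⟩ := ht
  have hM : (0:ℝ) ≤ δ ^ (-(d.re+1)) * Real.exp (π * |d.im|) := by positivity
  have hb1 : ‖(t:ℂ) ^ (d + r1)‖ ≤ 1 := by
    rw [show ‖(t:ℂ) ^ (d+r1)‖ = ‖((t:ℂ) ^ (d+r1))‖ from rfl,
      Complex.norm_cpow_eq_rpow_re_of_pos ht0]
    apply Real.rpow_le_one (le_of_lt ht0) ht1
    simp; linarith
  have hb2 : ‖((1:ℂ) - t) ^ (d + r2)‖ ≤ 1 := by
    rcases eq_or_lt_of_le ht1 with h | h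
    · have hz0 : ((1:ℂ) - t) = 0 := by rw [h]; norm_num
      rw [hz0, Complex.zero_cpow
        (by intro hc; have := congrArg Complex.re hc; simp at this; linarith)]
      norm_num
    · have h0 : (0:ℝ) < 1 - t := by linarith
      rw [show ((1:ℂ) - t) = ((1 - t : ℝ) : ℂ) by push_cast; ring,
        show ‖((1-t:ℝ):ℂ) ^ (d+r2)‖ = ‖(((1-t:ℝ):ℂ) ^ (d+r2))‖ from rfl,
        Complex.norm_cpow_eq_rpow_re_of_pos h0]
      apply Real.rpow_le_one (le_of_lt h0) (by linarith)
      simp; linarith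
  have hb3 : ‖((1:ℂ) - t*z) ^ (-(d+1))‖ ≤ δ ^ (-(d.re+1)) * Real.exp (π * |d.im|) := by
    apply aux_cpow_bound d (le_of_lt hd) hδ
    have hre : ((1:ℂ) - t*z).re = 1 - t * z.re := by simp
    rw [hre]
    rcases le_or_gt 0 z.re with h | h
    · nlinarith
    · nlinarith
  calc ‖(t:ℂ) ^ (d + r1) * ((1:ℂ) - t) ^ (d + r2) * ((1:ℂ) - t*z) ^ (-(d+1))‖
      = ‖(t:ℂ) ^ (d + r1)‖ * ‖((1:ℂ) - t) ^ (d + r2)‖ * ‖((1:ℂ) - t*z) ^ (-(d+1))‖ := by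
        rw [norm_mul, norm_mul]
    _ ≤ 1 * 1 * (δ ^ (-(d.re+1)) * Real.exp (π * |d.im|)) := by
        gcongr <;> positivity
    _ = δ ^ (-(d.re+1)) * Real.exp (π * |d.im|) := by ring


lemma divisor_count_rpow_bound {ε : ℝ} (hε : 0 < ε) :
    ∃ C : ℝ, 0 < C ∧ ∀ m : ℕ, (m.divisors.card : ℝ) ≤ C * (m : ℝ) ^ ε := by
  have hlog2 : 0 < Real.log 2 := Real.log_pos one_lt_two
  set B : ℝ := max 1 (1 / (ε * Real.log 2)) with hB
  have hB1 : 1 ≤ B := le_max_left _ _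
  have hB2 : 1 ≤ B * (ε * Real.log 2) := by
    have h : 1 / (ε * Real.log 2) ≤ B := le_max_right _ _
    calc (1:ℝ) = 1 / (ε * Real.log 2) * (ε * Real.log 2) := by field_simp
    _ ≤ B * (ε * Real.log 2) := mul_le_mul_of_nonneg_right h (by positivity)
  set N : ℕ := ⌈(2:ℝ) ^ (1/ε)⌉₊ with hN
  refine ⟨B ^ N, by positivity, ?_⟩
  intro m
  rcases eq_or_ne m 0 with rfl | hm
  · simp [Real.zero_rpow hε.ne']
  have key : ∀ p ∈ m.primeFactors,
      ((m.factorization p + 1 : ℕ) : ℝ) ≤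
        (if p ≤ N then B else 1) * (((p ^ m.factorization p : ℕ) : ℝ)) ^ ε := by
    intro p hp
    have hpp : p.Prime := Nat.prime_of_mem_primeFactors hp
    have hp2 : (2:ℝ) ≤ (p:ℝ) := by exact_mod_cast hpp.two_le
    have hp0 : (0:ℝ) < (p:ℝ) := by linarith
    set a : ℕ := m.factorization p with ha
    have hcast : (((p ^ a : ℕ) : ℝ)) ^ ε = (p:ℝ) ^ ((a : ℝ) * ε) := by
      push_cast
      rw [← Real.rpow_natCast (p:ℝ) a, ← Real.rpow_mul hp0.le]
    rw [hcast]
    split_ifs with hsmall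
    · -- small prime: use B
      have hexp : 1 + (a:ℝ) * (ε * Real.log 2) ≤ (p:ℝ) ^ ((a:ℝ) * ε) := by
        rw [Real.rpow_def_of_pos hp0]
        have h1 : (a:ℝ) * ε * Real.log 2 ≤ Real.log (p:ℝ) * ((a:ℝ) * ε) := by
          have h := mul_le_mul_of_nonneg_right (Real.log_le_log two_pos hp2)
            (show (0:ℝ) ≤ (a:ℝ) * ε by positivity)
          nlinarith
        calc 1 + (a:ℝ) * (ε * Real.log 2) = ((a:ℝ) * ε * Real.log 2) + 1 := by ring
          _ ≤ Real.log (p:ℝ) * ((a:ℝ) * ε) + 1 := by linarith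
          _ ≤ Real.exp (Real.log (p:ℝ) * ((a:ℝ) * ε)) := Real.add_one_le_exp _
      have hc : (0:ℝ) ≤ (a:ℝ) := Nat.cast_nonneg a
      push_cast
      nlinarith [mul_le_mul_of_nonneg_left hexp (by linarith : (0:ℝ) ≤ B),
        mul_le_mul_of_nonneg_right hB2 hc]
    · -- large prime
      push_neg at hsmall
      have hpN : (2:ℝ) ^ (1/ε) ≤ (p:ℝ) := by
        have h1 : ((2:ℝ)) ^ (1/ε) ≤ (N:ℝ) := Nat.le_ceil _
        have h2 : (N:ℝ) < (p:ℝ) := by exact_mod_cast hsmall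
        linarith
      have hpe : (2:ℝ) ≤ (p:ℝ) ^ ε := by
        calc (2:ℝ) = ((2:ℝ) ^ (1/ε)) ^ ε := by
              rw [← Real.rpow_mul (by norm_num), one_div_mul_cancel hε.ne', Real.rpow_one]
          _ ≤ (p:ℝ) ^ ε := Real.rpow_le_rpow (by positivity) hpN hε.le
      have h3 : (p:ℝ) ^ ((a:ℝ) * ε) = ((p:ℝ) ^ ε) ^ a := by
        rw [mul_comm, Real.rpow_mul hp0.le, Real.rpow_natCast]
      rw [h3, one_mul]
      calc ((a + 1 : ℕ) : ℝ) ≤ ((2 ^ a : ℕ) : ℝ) := by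
            exact_mod_cast (Nat.lt_two_pow_self (n := a))
        _ = (2:ℝ) ^ a := by push_cast; ring
        _ ≤ ((p:ℝ) ^ ε) ^ a := pow_le_pow_left₀ (by norm_num) hpe a
  -- combine
  rw [Nat.card_divisors hm]
  have hprod : ((m.primeFactors.prod fun p => m.factorization p + 1 : ℕ) : ℝ) ≤
      m.primeFactors.prod fun p =>
        (if p ≤ N then B else 1) * (((p ^ m.factorization p : ℕ) : ℝ)) ^ ε := by
    push_cast
    apply Finset.prod_le_prod
    · intro p hp; positivity
    · intro p hp
      have := key p hp
      push_cast at this ⊢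
      exact this
  calc ((m.primeFactors.prod fun p => m.factorization p + 1 : ℕ) : ℝ)
      ≤ m.primeFactors.prod fun p =>
        (if p ≤ N then B else 1) * (((p ^ m.factorization p : ℕ) : ℝ)) ^ ε := hprod
    _ = (m.primeFactors.prod fun p => (if p ≤ N then B else 1)) *
        m.primeFactors.prod fun p => (((p ^ m.factorization p : ℕ) : ℝ)) ^ ε := by
        rw [Finset.prod_mul_distrib]
    _ ≤ B ^ N * (m : ℝ) ^ ε := by
        apply mul_le_mul
        · -- product of ifs
          rw [Finset.prod_ite]
          rw [Finset.prod_const, Finset.prod_const, one_pow, mul_one]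
          have hcard : (m.primeFactors.filter (fun p => p ≤ N)).card ≤ N := by
            have hsub : m.primeFactors.filter (fun p => p ≤ N) ⊆ Finset.Icc 1 N := by
              intro p hp
              simp only [Finset.mem_filter] at hp
              have := (Nat.prime_of_mem_primeFactors hp.1).two_le
              exact Finset.mem_Icc.2 ⟨by omega, hp.2⟩
            calc _ ≤ (Finset.Icc 1 N).card := Finset.card_le_card hsub
              _ = N := by rw [Nat.card_Icc]; omega
          exact pow_le_pow_right₀ hB1 hcard
        · -- product of rpow equals m^ε
          have : m.primeFactors.prod (fun p => (((p ^ m.factorization p : ℕ) : ℝ))) = (m:ℝ) := by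
            rw [← Nat.cast_prod]
            exact_mod_cast congrArg (Nat.cast (R := ℝ)) (Nat.factorization_prod_pow_eq_self hm)
          rw [← this, ← Real.finset_prod_rpow _ _ (fun p _ => by positivity) ε]
        · positivity
        · positivity


lemma sigmaC_norm_le (r : ℂ) (hr : 0 ≤ r.re) (m : ℤ) :
    ‖sigmaC (-r) m‖ ≤ (m.natAbs.divisors.card : ℝ) := by
  unfold sigmaC
  calc ‖∑ d ∈ m.natAbs.divisors, (d : ℂ) ^ (-r)‖
      ≤ ∑ d ∈ m.natAbs.divisors, ‖(d : ℂ) ^ (-r)‖ := norm_sum_le _ _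
    _ ≤ ∑ d ∈ m.natAbs.divisors, 1 := by
        apply Finset.sum_le_sum
        intro i hi
        have hi0 : 0 < i := Nat.pos_of_mem_divisors hi
        have hi0' : (0:ℝ) < (i:ℝ) := by exact_mod_cast hi0
        rw [show ((i:ℕ):ℂ) = (((i:ℝ)):ℂ) by push_cast; ring,
          show ‖(((i:ℝ)):ℂ) ^ (-r)‖ = ‖((((i:ℝ)):ℂ) ^ (-r))‖ from rfl,
          Complex.norm_cpow_eq_rpow_re_of_pos hi0']
        apply Real.rpow_le_one_of_one_le_of_nonpos (by exact_mod_cast hi0)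
        simp [hr]
    _ = (m.natAbs.divisors.card : ℝ) := by simp


lemma integrand_continuousOn (r1 r2 d : ℂ) {z : ℂ} (hz : z.re < 1) :
    ContinuousOn (fun t : ℝ => (t:ℂ) ^ (d + r1) * ((1:ℂ) - t) ^ (d + r2) *
      ((1:ℂ) - t * z) ^ (-(d+1))) (Set.Ioo 0 1) := by
  intro t ht
  obtain ⟨ht0, ht1⟩ := ht
  apply ContinuousAt.continuousWithinAt
  apply ContinuousAt.mul
  apply ContinuousAt.mul
  · exact (continuousAt_cpow_const (by simp [Complex.mem_slitPlane_iff, ht0])).comp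
      Complex.continuous_ofReal.continuousAt
  · exact (continuousAt_cpow_const
        (by simp only [Complex.mem_slitPlane_iff]; left; simp [ht1])).comp
      (continuous_const.sub Complex.continuous_ofReal).continuousAt
  · refine (continuousAt_cpow_const ?_).comp
      (continuous_const.sub ((Complex.continuous_ofReal).mul continuous_const)).continuousAt
    simp only [Complex.mem_slitPlane_iff]
    left
    have : ((1:ℂ) - (t:ℂ) * z).re = 1 - t * z.re := by simp
    rw [this]
    rcases le_or_gt z.re 0 with h | h
    · nlinarith
    · nlinarith

lemma F_tendsto (r1 r2 d : ℂ) (h1 : 0 ≤ r1.re) (h2 : 0 ≤ r2.re) (hd : 0 < d.re)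
    {δ : ℝ} (hδ : 0 < δ) (hδ1 : δ ≤ 1) {x : ℝ} (hx : x ≤ 1 - δ) (s : ℝ) :
    Tendsto (fun ε : ℝ => F r1 r2 d ((x : ℂ) + ((s * ε : ℝ) : ℂ) * Complex.I))
      (𝓝[>] (0:ℝ)) (𝓝 (F r1 r2 d (x : ℂ))) := by
  unfold F
  apply Filter.Tendsto.const_mul
  apply intervalIntegral.tendsto_integral_filter_of_dominated_convergence
    (fun _ : ℝ => δ ^ (-(d.re+1)) * Real.exp (π * |d.im|))
  · -- measurability
    apply Filter.Eventually.of_forall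
    intro ε
    have hcont := integrand_continuousOn r1 r2 d
      (z := (x : ℂ) + ((s * ε : ℝ) : ℂ) * Complex.I) (by simp; linarith)
    have := hcont.aestronglyMeasurable (μ := volume) measurableSet_Ioo
    rwa [Set.uIoc_of_le (zero_le_one (α := ℝ)),
      ← Measure.restrict_congr_set Ioo_ae_eq_Ioc]
  · -- bound
    apply Filter.Eventually.of_forall
    intro ε
    apply Filter.Eventually.of_forall
    intro t ht
    exact aux_integrand_bound r1 r2 d h1 h2 hd hδ hδ1 (by simp; linarith) ht
  · exact intervalIntegrable_const
  · -- pointwise limit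
    apply Filter.Eventually.of_forall
    intro t ht
    rw [Set.uIoc_of_le (zero_le_one (α := ℝ))] at ht
    obtain ⟨ht0, ht1⟩ := ht
    rcases eq_or_lt_of_le ht1 with h | h
    · have h0 : ∀ w : ℂ, (t:ℂ) ^ (d + r1) * ((1:ℂ) - t) ^ (d + r2) *
          ((1:ℂ) - t * w) ^ (-(d+1)) = 0 := by
        intro w
        have : ((1:ℂ) - (t:ℂ)) = 0 := by rw [h]; norm_num
        rw [this, Complex.zero_cpow
          (by intro hc; have := congrArg Complex.re hc; simp at this; linarith)]
        ring
      simp only [h0]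
      exact tendsto_const_nhds
    · have hpath : Tendsto (fun ε : ℝ => (x : ℂ) + ((s * ε : ℝ) : ℂ) * Complex.I)
          (𝓝[>] (0:ℝ)) (𝓝 (x : ℂ)) := by
        apply Filter.Tendsto.mono_left _ nhdsWithin_le_nhds
        have hc : Continuous (fun ε : ℝ => (x : ℂ) + ((s * ε : ℝ) : ℂ) * Complex.I) := by
          continuity
        have := hc.tendsto 0
        simpa using this
      have hbase : ContinuousAt (fun w : ℂ => ((1:ℂ) - t * w) ^ (-(d+1))) (x : ℂ) := by
        refine (continuousAt_cpow_const ?_).comp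
          (continuous_const.sub (continuous_mul_left _)).continuousAt
        simp only [Complex.mem_slitPlane_iff]
        left
        have : ((1:ℂ) - (t:ℂ) * (x:ℂ)).re = 1 - t * x := by simp
        rw [this]
        rcases le_or_gt x 0 with hh | hh
        · nlinarith
        · nlinarith
      exact ((hbase.tendsto.comp hpath).const_mul ((t:ℂ) ^ (d + r1) * ((1:ℂ) - t) ^ (d + r2)))

lemma Gp_eq (r1 r2 d : ℂ) (h1 : 0 ≤ r1.re) (h2 : 0 ≤ r2.re) (hd : 0 < d.re)
    {δ : ℝ} (hδ : 0 < δ) (hδ1 : δ ≤ 1) {x : ℝ} (hx : x ≤ 1 - δ) :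
    Gp r1 r2 d x = F r1 r2 d (x : ℂ) := by
  apply Filter.Tendsto.limUnder_eq
  have := F_tendsto r1 r2 d h1 h2 hd hδ hδ1 hx 1
  convert this using 2 with ε
  push_cast
  ring

lemma Gm_eq (r1 r2 d : ℂ) (h1 : 0 ≤ r1.re) (h2 : 0 ≤ r2.re) (hd : 0 < d.re)
    {δ : ℝ} (hδ : 0 < δ) (hδ1 : δ ≤ 1) {x : ℝ} (hx : x ≤ 1 - δ) :
    Gm r1 r2 d x = F r1 r2 d (x : ℂ) := by
  apply Filter.Tendsto.limUnder_eq
  have := F_tendsto r1 r2 d h1 h2 hd hδ hδ1 hx (-1)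
  convert this using 2 with ε
  push_cast
  ring

lemma F_norm_le (r1 r2 d : ℂ) (h1 : 0 ≤ r1.re) (h2 : 0 ≤ r2.re) (hd : 0 < d.re)
    {δ : ℝ} (hδ : 0 < δ) (hδ1 : δ ≤ 1) {z : ℂ} (hz : z.re ≤ 1 - δ) :
    ‖F r1 r2 d z‖ ≤ ‖Complex.Gamma (2 * d + 2 + r1 + r2) /
      (Complex.Gamma (d + r1 + 1) * Complex.Gamma (d + r2 + 1))‖ *
      (δ ^ (-(d.re+1)) * Real.exp (π * |d.im|)) := by
  unfold F
  rw [norm_mul]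
  apply mul_le_mul_of_nonneg_left _ (norm_nonneg _)
  have := intervalIntegral.norm_integral_le_of_norm_le_const
    (f := fun t : ℝ => (t:ℂ) ^ (d + r1) * ((1:ℂ) - t) ^ (d + r2) *
      ((1:ℂ) - t * z) ^ (-(d+1))) (a := 0) (b := 1)
    (C := δ ^ (-(d.re+1)) * Real.exp (π * |d.im|))
    (fun t ht => aux_integrand_bound r1 r2 d h1 h2 hd hδ hδ1 hz ht)
  simpa using this



lemma Q_good_bound (n : ℕ) (hn : 0 < n) (k : ℕ) (r1 r2 d : ℂ)
    (h1 : 0 ≤ r1.re) (h2 : 0 ≤ r2.re) (hd : 0 < d.re)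
    (hΓ : Complex.Gamma (2*d+2+r1+r2) ≠ 0)
    (n1 : ℤ) (h0 : n1 ≠ 0) (hrange : n1 < 0 ∨ (n:ℤ) < n1) :
    ‖Q k r1 r2 d n n1‖ ≤
      2 * (‖Complex.Gamma (2 * d + 2 + r1 + r2) /
          (Complex.Gamma (d + r1 + 1) * Complex.Gamma (d + r2 + 1))‖ *
        ((1/((n:ℝ)+1)) ^ (-(d.re+1)) * Real.exp (π * |d.im|))) *
        max ‖Complex.I ^ k * Complex.cos ((π:ℂ) * r2 / 2)‖ ‖Complex.cos ((π:ℂ) * r1 / 2)‖ *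
        (n:ℝ) ^ (d.re+1) / ‖Complex.Gamma (2 * d + 2 + r1 + r2)‖ *
        |(n1:ℝ)| ^ (-d.re-1) := by
  have hnR : (0:ℝ) < (n:ℝ) := by exact_mod_cast hn
  set δ : ℝ := 1/((n:ℝ)+1) with hδdef
  have hδ : 0 < δ := by positivity
  have hδ1 : δ ≤ 1 := by
    rw [hδdef]
    rw [div_le_one (by linarith)]
    linarith
  set x : ℝ := (n:ℝ)/(n1:ℝ) with hxdef
  have hn1R : (n1:ℝ) ≠ 0 := by exact_mod_cast h0
  have hx : x ≤ 1 - δ := by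
    have h1δ : 1 - δ = (n:ℝ)/((n:ℝ)+1) := by
      rw [hδdef]; field_simp; ring
    rw [h1δ, hxdef]
    rcases hrange with h | h
    · have hneg : (n1:ℝ) < 0 := by exact_mod_cast h
      have : (n:ℝ)/(n1:ℝ) ≤ 0 := div_nonpos_of_nonneg_of_nonpos hnR.le hneg.le
      have hpos : 0 ≤ (n:ℝ)/((n:ℝ)+1) := by positivity
      linarith
    · have hge : (n:ℝ)+1 ≤ (n1:ℝ) := by exact_mod_cast h
      exact div_le_div_of_nonneg_left hnR.le (by linarith) hge
  have hGp := Gp_eq r1 r2 d h1 h2 hd hδ hδ1 hx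
  have hGm := Gm_eq r1 r2 d h1 h2 hd hδ hδ1 hx
  set cfac : ℂ := (if 0 < n1 then Complex.I ^ k * Complex.cos ((π:ℂ) * r2 / 2)
      else Complex.cos ((π:ℂ) * r1 / 2)) with hcfac
  set A : ℂ := ((|(n1 : ℝ) / (n : ℝ)| : ℝ) : ℂ) ^ (d + 1) with hA
  have hQ : Q k r1 r2 d n n1 = 2 * F r1 r2 d (x : ℂ) * cfac /
      (Complex.Gamma (2 * d + 2 + r1 + r2) * A) := by
    unfold Q
    rw [← hxdef, hGp, hGm, ← hcfac, ← hA]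
    congr 1
    ring
  have hb : (0:ℝ) < |(n1:ℝ)/(n:ℝ)| := by
    apply abs_pos.2
    exact div_ne_zero hn1R hnR.ne'
  have hAnorm : ‖A‖ = |(n1:ℝ)| ^ (d.re+1) / (n:ℝ) ^ (d.re+1) := by
    rw [hA, show ‖((|(n1 : ℝ) / (n : ℝ)| : ℝ) : ℂ) ^ (d + 1)‖ =
        ‖(((|(n1 : ℝ) / (n : ℝ)| : ℝ) : ℂ) ^ (d + 1))‖ from rfl,
      Complex.norm_cpow_eq_rpow_re_of_pos hb]
    have h' : (d+1).re = d.re + 1 := by simp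
    rw [h', abs_div, abs_of_pos hnR, Real.div_rpow (abs_nonneg _) hnR.le]
  have hApos : (0:ℝ) < ‖A‖ := by
    rw [hAnorm]
    exact div_pos (Real.rpow_pos_of_pos (abs_pos.2 hn1R) _) (Real.rpow_pos_of_pos hnR _)
  have hΓpos : (0:ℝ) < ‖Complex.Gamma (2*d+2+r1+r2)‖ := norm_pos_iff.2 hΓ
  have hFb := F_norm_le r1 r2 d h1 h2 hd hδ hδ1 (z := (x:ℂ)) (by simpa using hx)
  have hcK : ‖cfac‖ ≤ max ‖Complex.I ^ k * Complex.cos ((π:ℂ) * r2 / 2)‖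
      ‖Complex.cos ((π:ℂ) * r1 / 2)‖ := by
    rw [hcfac]
    split_ifs
    · exact le_max_left _ _
    · exact le_max_right _ _
  set Bf : ℝ := ‖Complex.Gamma (2 * d + 2 + r1 + r2) /
      (Complex.Gamma (d + r1 + 1) * Complex.Gamma (d + r2 + 1))‖ *
      (δ ^ (-(d.re+1)) * Real.exp (π * |d.im|)) with hBf
  set K : ℝ := max ‖Complex.I ^ k * Complex.cos ((π:ℂ) * r2 / 2)‖
      ‖Complex.cos ((π:ℂ) * r1 / 2)‖ with hK
  have hK0 : 0 ≤ K := le_trans (norm_nonneg _) (le_max_right _ _)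
  have hBf0 : 0 ≤ Bf := by
    rw [hBf]; positivity
  have hnum : ‖(2:ℂ)‖ * ‖F r1 r2 d (x : ℂ)‖ * ‖cfac‖ ≤ 2 * Bf * K := by
    have h2' : ‖(2:ℂ)‖ = 2 := by norm_num
    rw [h2']
    have hF0 : (0:ℝ) ≤ ‖F r1 r2 d (x:ℂ)‖ := norm_nonneg _
    nlinarith [norm_nonneg cfac]
  have hexp : |(n1:ℝ)| ^ (-d.re-1) = (|(n1:ℝ)| ^ (d.re+1))⁻¹ := by
    rw [← Real.rpow_neg (abs_nonneg _)]
    congr 1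
    ring
  calc ‖Q k r1 r2 d n n1‖
      = ‖(2:ℂ)‖ * ‖F r1 r2 d (x : ℂ)‖ * ‖cfac‖ /
        (‖Complex.Gamma (2 * d + 2 + r1 + r2)‖ * ‖A‖) := by
        rw [hQ, norm_div, norm_mul, norm_mul, norm_mul]
    _ ≤ (2 * Bf * K) / (‖Complex.Gamma (2 * d + 2 + r1 + r2)‖ * ‖A‖) :=
        (div_le_div_iff_of_pos_right (mul_pos hΓpos hApos)).2 hnum
    _ = 2 * Bf * K * (n:ℝ) ^ (d.re+1) / ‖Complex.Gamma (2 * d + 2 + r1 + r2)‖ *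
        |(n1:ℝ)| ^ (-d.re-1) := by
        rw [hAnorm, hexp]
        have hx1 : (0:ℝ) < |(n1:ℝ)| ^ (d.re+1) := Real.rpow_pos_of_pos (abs_pos.2 hn1R) _
        have hx2 : (0:ℝ) < (n:ℝ) ^ (d.re+1) := Real.rpow_pos_of_pos hnR _
        field_simp
        try ring

lemma sigma_rpow_bound (r : ℂ) (hr : 0 ≤ r.re) {ε : ℝ} (hε : 0 < ε) :
    ∃ C : ℝ, 0 < C ∧ ∀ m : ℤ, ‖sigmaC (-r) m‖ ≤ C * |(m:ℝ)| ^ ε := by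
  obtain ⟨C, hC0, hC⟩ := divisor_count_rpow_bound hε
  refine ⟨C, hC0, fun m => ?_⟩
  have h1 := sigmaC_norm_le r hr m
  have h2 := hC m.natAbs
  have h3 : ((m.natAbs : ℕ):ℝ) = |(m:ℝ)| := by
    rw [Nat.cast_natAbs]; exact Int.cast_abs
  rw [h3] at h2
  linarith

/-- Uniform bound `|Q(n1, n−n1)| ≤ C·|n1|^{−Re(d)−1}`, and consequently absolute summability of
the convolution family. -/
theorem Q_bound_and_absolute_summability
    (n : ℕ) (hn : 0 < n) (k : ℕ) (hke : Even k) (hk6 : 6 ≤ k)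
    (r1 r2 d : ℂ) (hsum : r1 + r2 + 2 * d + 2 = (k : ℂ))
    (hr1 : 0 ≤ r1.re) (hr2 : 0 ≤ r2.re) (hd : 0 < d.re) :
    (∃ C > (0:ℝ), ∀ n1 : ℤ, n1 ≠ 0 → n1 ≠ (n : ℤ) →
        ‖Q k r1 r2 d n n1‖ ≤ C * (|(n1 : ℝ)|) ^ (-d.re - 1)) ∧
      Summable (fun m : {m : ℤ // m ≠ 0 ∧ m ≠ (n : ℤ)} =>
        ‖Q k r1 r2 d n m.1 * sigmaC (-r1) m.1 * sigmaC (-r2) ((n : ℤ) - m.1)‖) := by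
  have hnR : (0:ℝ) < (n:ℝ) := by exact_mod_cast hn
  have hk : (2*d+2+r1+r2 : ℂ) = (k:ℂ) := by linear_combination hsum
  have hΓ : Complex.Gamma (2*d+2+r1+r2) ≠ 0 := by
    rw [hk]
    apply Complex.Gamma_ne_zero
    intro m hm
    have h := congrArg Complex.re hm
    simp at h
    have hk6' : (6:ℝ) ≤ (k:ℝ) := by exact_mod_cast hk6
    have hm0 : (0:ℝ) ≤ (m:ℝ) := Nat.cast_nonneg m
    linarith
  set Cg : ℝ := 2 * (‖Complex.Gamma (2 * d + 2 + r1 + r2) /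
        (Complex.Gamma (d + r1 + 1) * Complex.Gamma (d + r2 + 1))‖ *
      ((1/((n:ℝ)+1)) ^ (-(d.re+1)) * Real.exp (π * |d.im|))) *
      max ‖Complex.I ^ k * Complex.cos ((π:ℂ) * r2 / 2)‖ ‖Complex.cos ((π:ℂ) * r1 / 2)‖ *
      (n:ℝ) ^ (d.re+1) / ‖Complex.Gamma (2 * d + 2 + r1 + r2)‖ with hCg
  have hCg0 : 0 ≤ Cg := by rw [hCg]; positivity
  set Cb : ℝ := ∑ m ∈ Finset.Ioo (0:ℤ) (n:ℤ), ‖Q k r1 r2 d n m‖ * |(m:ℝ)| ^ (d.re+1) with hCb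
  have hCb0 : 0 ≤ Cb := Finset.sum_nonneg fun i _ => by positivity
  set C : ℝ := Cg + Cb + 1 with hC
  have hC0 : 0 < C := by rw [hC]; linarith
  have hmain : ∀ n1 : ℤ, n1 ≠ 0 → n1 ≠ (n:ℤ) →
      ‖Q k r1 r2 d n n1‖ ≤ C * |(n1:ℝ)| ^ (-d.re-1) := by
    intro n1 h01 hn1n
    have habs1 : (1:ℝ) ≤ |(n1:ℝ)| := by
      have h := Int.one_le_abs h01
      exact_mod_cast (by exact_mod_cast h : ((1:ℤ):ℝ) ≤ ((|n1|:ℤ):ℝ))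
    have habspos : (0:ℝ) < |(n1:ℝ)| := by linarith
    have hrpow_pos : 0 < |(n1:ℝ)| ^ (-d.re-1) := Real.rpow_pos_of_pos habspos _
    have hCle : Cg ≤ C := by rw [hC]; linarith
    have hCble : Cb ≤ C := by rw [hC]; linarith
    rcases lt_trichotomy n1 0 with hlt | h0' | hgt
    · have hg := Q_good_bound n hn k r1 r2 d hr1 hr2 hd hΓ n1 h01 (Or.inl hlt)
      calc ‖Q k r1 r2 d n n1‖ ≤ Cg * |(n1:ℝ)| ^ (-d.re-1) := hg
        _ ≤ C * |(n1:ℝ)| ^ (-d.re-1) := mul_le_mul_of_nonneg_right hCle hrpow_pos.le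
    · exact absurd h0' h01
    · rcases lt_trichotomy n1 (n:ℤ) with hlt2 | heq | hgt2
      · have hmem : n1 ∈ Finset.Ioo (0:ℤ) (n:ℤ) := Finset.mem_Ioo.2 ⟨hgt, hlt2⟩
        have hterm : ‖Q k r1 r2 d n n1‖ * |(n1:ℝ)| ^ (d.re+1) ≤ Cb := by
          rw [hCb]
          exact Finset.single_le_sum
            (f := fun m => ‖Q k r1 r2 d n m‖ * |(m:ℝ)| ^ (d.re+1))
            (fun i _ => by positivity) hmem
        have hid : |(n1:ℝ)| ^ (d.re+1) * |(n1:ℝ)| ^ (-d.re-1) = 1 := by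
          rw [← Real.rpow_add habspos, show (d.re+1)+(-d.re-1) = 0 by ring, Real.rpow_zero]
        calc ‖Q k r1 r2 d n n1‖
            = ‖Q k r1 r2 d n n1‖ * (|(n1:ℝ)| ^ (d.re+1) * |(n1:ℝ)| ^ (-d.re-1)) := by
              rw [hid, mul_one]
          _ = (‖Q k r1 r2 d n n1‖ * |(n1:ℝ)| ^ (d.re+1)) * |(n1:ℝ)| ^ (-d.re-1) := by ring
          _ ≤ Cb * |(n1:ℝ)| ^ (-d.re-1) := mul_le_mul_of_nonneg_right hterm hrpow_pos.le
          _ ≤ C * |(n1:ℝ)| ^ (-d.re-1) := mul_le_mul_of_nonneg_right hCble hrpow_pos.le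
      · exact absurd heq hn1n
      · have hg := Q_good_bound n hn k r1 r2 d hr1 hr2 hd hΓ n1 h01 (Or.inr hgt2)
        calc ‖Q k r1 r2 d n n1‖ ≤ Cg * |(n1:ℝ)| ^ (-d.re-1) := hg
          _ ≤ C * |(n1:ℝ)| ^ (-d.re-1) := mul_le_mul_of_nonneg_right hCle hrpow_pos.le
  refine ⟨⟨C, hC0, hmain⟩, ?_⟩
  have hε : (0:ℝ) < d.re/4 := by linarith
  obtain ⟨C1, hC10, hσ1⟩ := sigma_rpow_bound r1 hr1 hε
  obtain ⟨C2, hC20, hσ2⟩ := sigma_rpow_bound r2 hr2 hε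
  set Kt : ℝ := C * C1 * (C2 * ((n:ℝ)+1) ^ (d.re/4)) with hKt
  have hsum2 : Summable (fun m : ℤ => Kt * |(m:ℝ)| ^ (-(1+d.re/2))) :=
    (Real.summable_abs_int_rpow (by linarith : (1:ℝ) < 1 + d.re/2)).mul_left _
  apply Summable.of_nonneg_of_le (fun m => norm_nonneg _) _
    (hsum2.subtype {m : ℤ | m ≠ 0 ∧ m ≠ (n:ℤ)})
  rintro ⟨m, hm0, hmn⟩
  have habs1 : (1:ℝ) ≤ |(m:ℝ)| := by
    have h := Int.one_le_abs hm0
    exact_mod_cast (by exact_mod_cast h : ((1:ℤ):ℝ) ≤ ((|m|:ℤ):ℝ))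
  have habspos : (0:ℝ) < |(m:ℝ)| := by linarith
  have hQb := hmain m hm0 hmn
  have hs1 := hσ1 m
  have hs2 : ‖sigmaC (-r2) ((n:ℤ) - m)‖ ≤ C2 * (((n:ℝ)+1) ^ (d.re/4) * |(m:ℝ)| ^ (d.re/4)) := by
    have h := hσ2 ((n:ℤ) - m)
    have hcast : |(((n:ℤ) - m : ℤ):ℝ)| = |(n:ℝ) - (m:ℝ)| := by push_cast; ring_nf
    rw [hcast] at h
    have hle : |(n:ℝ) - (m:ℝ)| ≤ ((n:ℝ)+1) * |(m:ℝ)| := by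
      have := abs_sub (n:ℝ) (m:ℝ)
      have h4 : |(n:ℝ) - (m:ℝ)| ≤ |(n:ℝ)| + |(m:ℝ)| := abs_sub _ _
      rw [abs_of_pos hnR] at h4
      nlinarith
    have h5 : |(n:ℝ) - (m:ℝ)| ^ (d.re/4) ≤ (((n:ℝ)+1) * |(m:ℝ)|) ^ (d.re/4) :=
      Real.rpow_le_rpow (abs_nonneg _) hle hε.le
    rw [Real.mul_rpow (by linarith) (abs_nonneg _)] at h5
    calc ‖sigmaC (-r2) ((n:ℤ) - m)‖ ≤ C2 * |(n:ℝ) - (m:ℝ)| ^ (d.re/4) := h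
      _ ≤ C2 * (((n:ℝ)+1) ^ (d.re/4) * |(m:ℝ)| ^ (d.re/4)) :=
        mul_le_mul_of_nonneg_left h5 hC20.le
  calc ‖Q k r1 r2 d n m * sigmaC (-r1) m * sigmaC (-r2) ((n:ℤ) - m)‖
      = ‖Q k r1 r2 d n m‖ * ‖sigmaC (-r1) m‖ * ‖sigmaC (-r2) ((n:ℤ) - m)‖ := by
        rw [norm_mul, norm_mul]
    _ ≤ (C * |(m:ℝ)| ^ (-d.re-1)) * (C1 * |(m:ℝ)| ^ (d.re/4)) *
        (C2 * (((n:ℝ)+1) ^ (d.re/4) * |(m:ℝ)| ^ (d.re/4))) := by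
        apply mul_le_mul (mul_le_mul hQb hs1 (norm_nonneg _) (by positivity)) hs2
          (norm_nonneg _) (by positivity)
    _ = Kt * (|(m:ℝ)| ^ (-d.re-1) * |(m:ℝ)| ^ (d.re/4) * |(m:ℝ)| ^ (d.re/4)) := by
        rw [hKt]; ring
    _ = Kt * |(m:ℝ)| ^ (-(1+d.re/2)) := by
        rw [← Real.rpow_add habspos, ← Real.rpow_add habspos,
          show (-d.re-1) + d.re/4 + d.re/4 = -(1+d.re/2) by ring]

end
end

section
/- For every integer n ≥ 1, the following identity of rational numbers holds: Σ_{n1=1}^{n−1} (10 − 55·(n1/n) + 66·(n1/n)²) · σ_3(n1) · σ_5(n−n1) = (σ_3(n) − σ_5(n))/24. -/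
open Finset

/-- Divisor power sum `σ_a(m) = ∑_{d ∣ m, d > 0} d^a`. -/
def sig (a m : ℕ) : ℕ := ∑ d ∈ m.divisors, d ^ a

def hp (a b x y : ℚ) : ℚ :=
  (3/8 : ℚ)*b^2*x^2*y^8 + ((-5)/2 : ℚ)*b^2*x^3*y^7 + (45/8 : ℚ)*b^2*x^4*y^6 + ((-21)/4 : ℚ)*b^2*x^5*y^5 + (7/4 : ℚ)*b^2*x^6*y^4 + ((-2) : ℚ)*a*b*x^3*y^7 + (35/4 : ℚ)*a*b*x^4*y^6 + ((-27)/2 : ℚ)*a*b*x^5*y^5 + (35/4 : ℚ)*a*b*x^6*y^4 + ((-2) : ℚ)*a*b*x^7*y^3 + (7/4 : ℚ)*a^2*x^4*y^6 + ((-21)/4 : ℚ)*a^2*x^5*y^5 + (45/8 : ℚ)*a^2*x^6*y^4 + ((-5)/2 : ℚ)*a^2*x^7*y^3 + (3/8 : ℚ)*a^2*x^8*y^2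

def Ts (a b x y : ℚ) : ℚ :=
  (5 : ℚ)*b^2*x^3*y^7 + (21/2 : ℚ)*b^2*x^5*y^5 + ((-35)/2 : ℚ)*a*b*x^4*y^6 + ((-35)/2 : ℚ)*a*b*x^6*y^4 + (21/2 : ℚ)*a^2*x^5*y^5 + (5 : ℚ)*a^2*x^7*y^3

def Tf (a b x y : ℚ) : ℚ :=
  (10 : ℚ)*b^2*x^3*y^7 + ((-35) : ℚ)*a*b*x^4*y^6 + (21 : ℚ)*a^2*x^5*y^5

lemma K1 (a b x y : ℚ) : hp (a-b) b x (x+y) - hp a b x y = Ts a b x y := by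
  simp only [hp, Ts]; ring

lemma K2 (a b x y : ℚ) : hp a (b-a) (x+y) y - hp a b x y = Ts a b x y := by
  simp only [hp, Ts]; ring

lemma K3 (a b x y : ℚ) : Tf a b x y + Tf b a y x = 2 * Ts a b x y := by
  simp only [Tf, Ts]; ring

lemma hp_diag (a b x : ℚ) : hp a b x x = 0 := by simp only [hp]; ring

-- Faulhaber
lemma fh2 (s : ℕ) : ∑ x ∈ range s, (x:ℚ)^2 = (1/6 : ℚ)*s + ((-1)/2 : ℚ)*s^2 + (1/3 : ℚ)*s^3 := by
  induction s with
  | zero => simp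
  | succ n ih => rw [Finset.sum_range_succ, ih]; push_cast; ring

lemma fh3 (s : ℕ) : ∑ x ∈ range s, (x:ℚ)^3 = (1/4 : ℚ)*s^2 + ((-1)/2 : ℚ)*s^3 + (1/4 : ℚ)*s^4 := by
  induction s with
  | zero => simp
  | succ n ih => rw [Finset.sum_range_succ, ih]; push_cast; ring

lemma fh4 (s : ℕ) : ∑ x ∈ range s, (x:ℚ)^4 = ((-1)/30 : ℚ)*s + (1/3 : ℚ)*s^3 + ((-1)/2 : ℚ)*s^4 + (1/5 : ℚ)*s^5 := by
  induction s with
  | zero => simp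
  | succ n ih => rw [Finset.sum_range_succ, ih]; push_cast; ring

lemma fh5 (s : ℕ) : ∑ x ∈ range s, (x:ℚ)^5 = ((-1)/12 : ℚ)*s^2 + (5/12 : ℚ)*s^4 + ((-1)/2 : ℚ)*s^5 + (1/6 : ℚ)*s^6 := by
  induction s with
  | zero => simp
  | succ n ih => rw [Finset.sum_range_succ, ih]; push_cast; ring

lemma fh6 (s : ℕ) : ∑ x ∈ range s, (x:ℚ)^6 = (1/42 : ℚ)*s + ((-1)/6 : ℚ)*s^3 + (1/2 : ℚ)*s^5 + ((-1)/2 : ℚ)*s^6 + (1/7 : ℚ)*s^7 := by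
  induction s with
  | zero => simp
  | succ n ih => rw [Finset.sum_range_succ, ih]; push_cast; ring

-- diagonal sum
lemma K4 (a m : ℕ) :
    ∑ x ∈ Finset.Ico 1 m, (Ts a a x ((m - x : ℕ)) + hp a a x ((m - x : ℕ))) =
      (a:ℚ)^2 * (((m:ℚ)^5 - (m:ℚ)^7)/24) := by
  rcases Nat.eq_zero_or_pos m with hm | hm
  · subst hm; simp
  · have step1 : ∀ x ∈ Finset.Ico 1 m,
        (Ts a a x ((m - x : ℕ)) + hp a a x ((m - x : ℕ)))
          = ((a:ℚ)^2*(3/8)*(m:ℚ)^8)*(x:ℚ)^2 + ((a:ℚ)^2*((-5)/2)*(m:ℚ)^7)*(x:ℚ)^3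
            + ((a:ℚ)^2*(45/8)*(m:ℚ)^6)*(x:ℚ)^4 + ((a:ℚ)^2*((-21)/4)*(m:ℚ)^5)*(x:ℚ)^5
            + ((a:ℚ)^2*(7/4)*(m:ℚ)^4)*(x:ℚ)^6 := by
      intro x hx
      rw [Finset.mem_Ico] at hx
      rw [Nat.cast_sub hx.2.le]
      simp only [Ts, hp]; ring
    rw [Finset.sum_congr rfl step1]
    have conv : ∑ x ∈ Finset.Ico 1 m, (((a:ℚ)^2*(3/8)*(m:ℚ)^8)*(x:ℚ)^2 + ((a:ℚ)^2*((-5)/2)*(m:ℚ)^7)*(x:ℚ)^3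
            + ((a:ℚ)^2*(45/8)*(m:ℚ)^6)*(x:ℚ)^4 + ((a:ℚ)^2*((-21)/4)*(m:ℚ)^5)*(x:ℚ)^5
            + ((a:ℚ)^2*(7/4)*(m:ℚ)^4)*(x:ℚ)^6)
        = ∑ x ∈ range m, (((a:ℚ)^2*(3/8)*(m:ℚ)^8)*(x:ℚ)^2 + ((a:ℚ)^2*((-5)/2)*(m:ℚ)^7)*(x:ℚ)^3
            + ((a:ℚ)^2*(45/8)*(m:ℚ)^6)*(x:ℚ)^4 + ((a:ℚ)^2*((-21)/4)*(m:ℚ)^5)*(x:ℚ)^5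
            + ((a:ℚ)^2*(7/4)*(m:ℚ)^4)*(x:ℚ)^6) := by
      rw [Finset.range_eq_Ico, Finset.sum_eq_sum_Ico_succ_bot hm]
      norm_num
    rw [conv]
    simp only [Finset.sum_add_distrib, ← Finset.mul_sum]
    rw [fh2, fh3, fh4, fh5, fh6]
    ring

abbrev Q4 := ℕ × ℕ × ℕ × ℕ

def hv (p : Q4) : ℚ := hp p.1 p.2.1 p.2.2.1 p.2.2.2
def Tsv (p : Q4) : ℚ := Ts p.1 p.2.1 p.2.2.1 p.2.2.2
def Tfv (p : Q4) : ℚ := Tf p.1 p.2.1 p.2.2.1 p.2.2.2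

def Sfin (n : ℕ) : Finset Q4 :=
  ((Finset.Icc 1 n) ×ˢ (Finset.Icc 1 n) ×ˢ (Finset.Icc 1 n) ×ˢ (Finset.Icc 1 n)).filter
    fun p => p.1 * p.2.2.1 + p.2.1 * p.2.2.2 = n

lemma mem_Sfin {n a b x y : ℕ} :
    (a, b, x, y) ∈ Sfin n ↔ 0 < a ∧ 0 < b ∧ 0 < x ∧ 0 < y ∧ a * x + b * y = n := by
  simp only [Sfin, Finset.mem_filter, Finset.mem_product, Finset.mem_Icc]
  constructor
  · rintro ⟨⟨⟨h1, _⟩, ⟨h2, _⟩, ⟨h3, _⟩, h4, _⟩, he⟩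
    exact ⟨h1, h2, h3, h4, he⟩
  · rintro ⟨h1, h2, h3, h4, he⟩
    have hax : a * x ≤ n := he ▸ Nat.le_add_right _ _
    have hby : b * y ≤ n := he ▸ Nat.le_add_left _ _
    refine ⟨⟨⟨h1, ?_⟩, ⟨h2, ?_⟩, ⟨h3, ?_⟩, h4, ?_⟩, he⟩
    · exact le_trans (Nat.le_mul_of_pos_right a h3) hax
    · exact le_trans (Nat.le_mul_of_pos_right b h4) hby
    · exact le_trans (Nat.le_mul_of_pos_left x h1) hax
    · exact le_trans (Nat.le_mul_of_pos_left y h2) hby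

lemma tri_split {α : Type*} [DecidableEq α] (s : Finset α) (f : α → ℚ) (u v : α → ℕ) :
    ∑ p ∈ s, f p =
      ∑ p ∈ s.filter (fun p => u p < v p), f p +
      ∑ p ∈ s.filter (fun p => u p = v p), f p +
      ∑ p ∈ s.filter (fun p => v p < u p), f p := by
  classical
  rw [← Finset.sum_filter_add_sum_filter_not s (fun p => u p = v p) f]
  rw [← Finset.sum_filter_add_sum_filter_not (s.filter (fun p => ¬ u p = v p))
    (fun p => u p < v p) f]
  rw [Finset.filter_filter, Finset.filter_filter]
  have e1 : s.filter (fun p => ¬u p = v p ∧ u p < v p) = s.filter (fun p => u p < v p) :=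
    Finset.filter_congr (fun p _ => by omega)
  have e2 : s.filter (fun p => ¬u p = v p ∧ ¬u p < v p) = s.filter (fun p => v p < u p) :=
    Finset.filter_congr (fun p _ => by omega)
  rw [e1, e2]; ring

lemma swap_sum (n : ℕ) (g : Q4 → ℚ) :
    ∑ p ∈ Sfin n, g (p.2.1, p.1, p.2.2.2, p.2.2.1) = ∑ p ∈ Sfin n, g p := by
  refine Finset.sum_nbij' (fun p => (p.2.1, p.1, p.2.2.2, p.2.2.1))
    (fun p => (p.2.1, p.1, p.2.2.2, p.2.2.1)) ?_ ?_ ?_ ?_ ?_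
  · rintro ⟨a,b,x,y⟩ hp
    dsimp only
    rw [mem_Sfin] at hp; rw [mem_Sfin]
    exact ⟨hp.2.1, hp.1, hp.2.2.2.1, hp.2.2.1, by omega⟩
  · rintro ⟨a,b,x,y⟩ hp
    dsimp only
    rw [mem_Sfin] at hp; rw [mem_Sfin]
    exact ⟨hp.2.1, hp.1, hp.2.2.2.1, hp.2.2.1, by omega⟩
  · rintro ⟨a,b,x,y⟩ _; rfl
  · rintro ⟨a,b,x,y⟩ _; rfl
  · rintro ⟨a,b,x,y⟩ _; rfl

lemma phi_sum (n : ℕ) (g : Q4 → ℚ) :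
    ∑ p ∈ (Sfin n).filter (fun p => p.2.1 < p.1),
        g (p.1 - p.2.1, p.2.1, p.2.2.1, p.2.2.1 + p.2.2.2) =
      ∑ p ∈ (Sfin n).filter (fun p => p.2.2.1 < p.2.2.2), g p := by
  refine Finset.sum_nbij' (fun p => (p.1 - p.2.1, p.2.1, p.2.2.1, p.2.2.1 + p.2.2.2))
    (fun p => (p.1 + p.2.1, p.2.1, p.2.2.1, p.2.2.2 - p.2.2.1)) ?_ ?_ ?_ ?_ ?_
  · rintro ⟨a,b,x,y⟩ hp
    dsimp only
    simp only [Finset.mem_filter, mem_Sfin] at hp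
    obtain ⟨⟨h1,h2,h3,h4,he⟩, hba⟩ := hp
    simp only [Finset.mem_filter, mem_Sfin]
    refine ⟨⟨by omega, by omega, by omega, by omega, ?_⟩, by omega⟩
    obtain ⟨c, rfl⟩ : ∃ c, a = b + c := ⟨a - b, by omega⟩
    have h5 : (b + c) - b = c := by omega
    rw [h5]
    calc c * x + b * (x + y) = (b + c) * x + b * y := by ring
      _ = n := he
  · rintro ⟨a,b,x,y⟩ hp
    dsimp only
    simp only [Finset.mem_filter, mem_Sfin] at hp
    obtain ⟨⟨h1,h2,h3,h4,he⟩, hxy⟩ := hp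
    simp only [Finset.mem_filter, mem_Sfin]
    refine ⟨⟨by omega, by omega, by omega, by omega, ?_⟩, by omega⟩
    obtain ⟨c, rfl⟩ : ∃ c, y = x + c := ⟨y - x, by omega⟩
    have h5 : (x + c) - x = c := by omega
    rw [h5]
    calc (a + b) * x + b * c = a * x + b * (x + c) := by ring
      _ = n := he
  · rintro ⟨a,b,x,y⟩ hp
    dsimp only
    simp only [Finset.mem_filter, mem_Sfin] at hp
    simp only [Prod.mk.injEq, and_true, true_and]
    omega
  · rintro ⟨a,b,x,y⟩ hp
    dsimp only
    simp only [Finset.mem_filter, mem_Sfin] at hp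
    simp only [Prod.mk.injEq, and_true, true_and]
    omega
  · rintro ⟨a,b,x,y⟩ _; rfl

lemma psi_sum (n : ℕ) (g : Q4 → ℚ) :
    ∑ p ∈ (Sfin n).filter (fun p => p.1 < p.2.1),
        g (p.1, p.2.1 - p.1, p.2.2.1 + p.2.2.2, p.2.2.2) =
      ∑ p ∈ (Sfin n).filter (fun p => p.2.2.2 < p.2.2.1), g p := by
  refine Finset.sum_nbij' (fun p => (p.1, p.2.1 - p.1, p.2.2.1 + p.2.2.2, p.2.2.2))
    (fun p => (p.1, p.2.1 + p.1, p.2.2.1 - p.2.2.2, p.2.2.2)) ?_ ?_ ?_ ?_ ?_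
  · rintro ⟨a,b,x,y⟩ hp
    dsimp only
    simp only [Finset.mem_filter, mem_Sfin] at hp
    obtain ⟨⟨h1,h2,h3,h4,he⟩, hab⟩ := hp
    simp only [Finset.mem_filter, mem_Sfin]
    refine ⟨⟨by omega, by omega, by omega, by omega, ?_⟩, by omega⟩
    obtain ⟨c, rfl⟩ : ∃ c, b = a + c := ⟨b - a, by omega⟩
    have h5 : (a + c) - a = c := by omega
    rw [h5]
    calc a * (x + y) + c * y = a * x + (a + c) * y := by ring
      _ = n := he
  · rintro ⟨a,b,x,y⟩ hp
    dsimp only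
    simp only [Finset.mem_filter, mem_Sfin] at hp
    obtain ⟨⟨h1,h2,h3,h4,he⟩, hyx⟩ := hp
    simp only [Finset.mem_filter, mem_Sfin]
    refine ⟨⟨by omega, by omega, by omega, by omega, ?_⟩, by omega⟩
    obtain ⟨c, rfl⟩ : ∃ c, x = y + c := ⟨x - y, by omega⟩
    have h5 : (y + c) - y = c := by omega
    rw [h5]
    calc a * c + (b + a) * y = a * (y + c) + b * y := by ring
      _ = n := he
  · rintro ⟨a,b,x,y⟩ hp
    dsimp only
    simp only [Finset.mem_filter, mem_Sfin] at hp
    simp only [Prod.mk.injEq, and_true, true_and]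
    omega
  · rintro ⟨a,b,x,y⟩ hp
    dsimp only
    simp only [Finset.mem_filter, mem_Sfin] at hp
    simp only [Prod.mk.injEq, and_true, true_and]
    omega
  · rintro ⟨a,b,x,y⟩ _; rfl

lemma E1 (n : ℕ) : ∑ p ∈ (Sfin n).filter (fun p => p.2.1 < p.1), Tsv p
    = ∑ p ∈ (Sfin n).filter (fun p => p.2.2.1 < p.2.2.2), hv p
      - ∑ p ∈ (Sfin n).filter (fun p => p.2.1 < p.1), hv p := by
  rw [← phi_sum n hv, ← Finset.sum_sub_distrib]
  apply Finset.sum_congr rfl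
  rintro ⟨a,b,x,y⟩ hp'
  simp only [Finset.mem_filter, mem_Sfin] at hp'
  obtain ⟨⟨h1,h2,h3,h4,he⟩, hba⟩ := hp'
  dsimp only [Tsv, hv]
  rw [Nat.cast_sub hba.le, Nat.cast_add]
  have := K1 (a:ℚ) b x y
  linarith

lemma E2 (n : ℕ) : ∑ p ∈ (Sfin n).filter (fun p => p.1 < p.2.1), Tsv p
    = ∑ p ∈ (Sfin n).filter (fun p => p.2.2.2 < p.2.2.1), hv p
      - ∑ p ∈ (Sfin n).filter (fun p => p.1 < p.2.1), hv p := by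
  rw [← psi_sum n hv, ← Finset.sum_sub_distrib]
  apply Finset.sum_congr rfl
  rintro ⟨a,b,x,y⟩ hp'
  simp only [Finset.mem_filter, mem_Sfin] at hp'
  obtain ⟨⟨h1,h2,h3,h4,he⟩, hab⟩ := hp'
  dsimp only [Tsv, hv]
  rw [Nat.cast_sub hab.le, Nat.cast_add]
  have := K2 (a:ℚ) b x y
  linarith

lemma E3 (n : ℕ) : ∑ p ∈ Sfin n, Tfv p = ∑ p ∈ Sfin n, Tsv p := by
  have h1 : ∀ p ∈ Sfin n, Tsv p = (Tfv p + Tfv (p.2.1, p.1, p.2.2.2, p.2.2.1))/2 := by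
    rintro ⟨a,b,x,y⟩ _
    dsimp only [Tsv, Tfv]
    have := K3 (a:ℚ) b x y
    linarith
  rw [Finset.sum_congr rfl h1, ← Finset.sum_div, Finset.sum_add_distrib,
    swap_sum n Tfv]
  ring

lemma E4 (n : ℕ) : ∑ p ∈ Sfin n, Tfv p
    = ∑ p ∈ (Sfin n).filter (fun p => p.2.1 = p.1), (Tsv p + hv p) := by
  have hzero : ∑ p ∈ (Sfin n).filter (fun p => p.2.2.1 = p.2.2.2), hv p = 0 := by
    apply Finset.sum_eq_zero
    rintro ⟨a,b,x,y⟩ hp'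
    simp only [Finset.mem_filter] at hp'
    have hxy : x = y := hp'.2
    dsimp only [hv]
    rw [← hxy]
    exact hp_diag _ _ _
  have t1 := tri_split (Sfin n) Tsv (fun p => p.2.1) (fun p => p.1)
  have t2 := tri_split (Sfin n) hv (fun p => p.2.1) (fun p => p.1)
  have t3 := tri_split (Sfin n) hv (fun p => p.2.2.1) (fun p => p.2.2.2)
  have e1 := E1 n
  have e2 := E2 n
  have e3 := E3 n
  have hsplit : ∑ p ∈ (Sfin n).filter (fun p => p.2.1 = p.1), (Tsv p + hv p)
      = ∑ p ∈ (Sfin n).filter (fun p => p.2.1 = p.1), Tsv p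
        + ∑ p ∈ (Sfin n).filter (fun p => p.2.1 = p.1), hv p :=
    Finset.sum_add_distrib
  linarith

lemma E5 (n : ℕ) : ∑ p ∈ (Sfin n).filter (fun p => p.2.1 = p.1), (Tsv p + hv p)
    = ∑ q ∈ n.divisorsAntidiagonal, (q.1:ℚ)^2 * (((q.2:ℚ)^5 - (q.2:ℚ)^7)/24) := by
  have step : ∑ p ∈ (Sfin n).filter (fun p => p.2.1 = p.1), (Tsv p + hv p)
      = ∑ q ∈ n.divisorsAntidiagonal.sigma (fun d => Finset.Ico 1 d.2),
          (Ts q.1.1 q.1.1 q.2 ((q.1.2 - q.2 : ℕ)) + hp q.1.1 q.1.1 q.2 ((q.1.2 - q.2 : ℕ))) := by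
    refine (Finset.sum_nbij' (fun q => (q.1.1, q.1.1, q.2, q.1.2 - q.2))
      (fun p => ⟨(p.1, p.2.2.1 + p.2.2.2), p.2.2.1⟩) ?_ ?_ ?_ ?_ ?_).symm
    · rintro ⟨⟨d, m⟩, x⟩ hq
      simp only [Finset.mem_sigma, Nat.mem_divisorsAntidiagonal, Finset.mem_Ico] at hq
      obtain ⟨⟨hdm, hn0⟩, hx1, hxm⟩ := hq
      dsimp only
      simp only [Finset.mem_filter, mem_Sfin]
      have hd : 0 < d := by
        rcases Nat.eq_zero_or_pos d with h | h
        · exfalso; apply hn0; rw [← hdm, h, zero_mul]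
        · exact h
      refine ⟨⟨hd, hd, by omega, by omega, ?_⟩, trivial⟩
      have hxs : x + (m - x) = m := by omega
      calc d * x + d * (m - x) = d * (x + (m - x)) := by ring
        _ = n := by rw [hxs, hdm]
    · rintro ⟨a,b,x,y⟩ hp'
      simp only [Finset.mem_filter, mem_Sfin] at hp'
      obtain ⟨⟨h1,h2,h3,h4,he⟩, hba⟩ := hp'
      dsimp only
      simp only [Finset.mem_sigma, Nat.mem_divisorsAntidiagonal, Finset.mem_Ico]
      refine ⟨⟨?_, ?_⟩, h3, by omega⟩
      · calc a * (x + y) = a * x + a * y := by ring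
          _ = n := by rw [← hba] at he ⊢; exact he
      · have : 1 ≤ a * x := Nat.mul_pos h1 h3
        omega
    · rintro ⟨⟨d, m⟩, x⟩ hq
      simp only [Finset.mem_sigma, Nat.mem_divisorsAntidiagonal, Finset.mem_Ico] at hq
      obtain ⟨⟨hdm, hn0⟩, hx1, hxm⟩ := hq
      dsimp only
      have hxs : x + (m - x) = m := by omega
      rw [hxs]
    · rintro ⟨a,b,x,y⟩ hp'
      simp only [Finset.mem_filter, mem_Sfin] at hp'
      obtain ⟨⟨h1,h2,h3,h4,he⟩, hba⟩ := hp'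
      dsimp only
      simp only [Prod.mk.injEq, and_true, true_and]
      omega
    · rintro ⟨⟨d, m⟩, x⟩ _
      rfl
  rw [step, Finset.sum_sigma]
  apply Finset.sum_congr rfl
  rintro ⟨d, m⟩ _
  exact K4 d m

lemma sig_cast (a m : ℕ) : (sig a m : ℚ) = ∑ d ∈ m.divisors, (d:ℚ)^a := by
  unfold sig
  push_cast
  rfl

lemma E6 (n : ℕ) : ∑ q ∈ n.divisorsAntidiagonal, (q.1:ℚ)^2 * (((q.2:ℚ)^5 - (q.2:ℚ)^7)/24)
    = (n:ℚ)^2 * (((sig 3 n : ℚ) - (sig 5 n : ℚ))/24) := by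
  have h1 : ∑ q ∈ n.divisorsAntidiagonal, (q.1:ℚ)^2 * (((q.2:ℚ)^5 - (q.2:ℚ)^7)/24)
      = ∑ i ∈ n.divisors, ((n / i : ℕ):ℚ)^2 * (((i:ℚ)^5 - (i:ℚ)^7)/24) :=
    Nat.sum_divisorsAntidiagonal' (fun a b => (a:ℚ)^2 * (((b:ℚ)^5 - (b:ℚ)^7)/24))
  rw [h1, sig_cast, sig_cast, ← Finset.sum_sub_distrib, Finset.sum_div, Finset.mul_sum]
  apply Finset.sum_congr rfl
  intro i hi
  rw [Nat.mem_divisors] at hi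
  have hin : ((n / i : ℕ):ℚ) * (i:ℚ) = (n:ℚ) := by
    rw [← Nat.cast_mul, Nat.div_mul_cancel hi.1]
  rw [← hin]
  ring

lemma keylemma (n : ℕ) : ∑ p ∈ Sfin n, Tfv p
    = (n:ℚ)^2 * (((sig 3 n : ℚ) - (sig 5 n : ℚ))/24) := by
  rw [E3, ← E6, ← E5]
  have t1 := tri_split (Sfin n) Tsv (fun p => p.2.1) (fun p => p.1)
  have e1 := E1 n
  have e2 := E2 n
  have t2 := tri_split (Sfin n) hv (fun p => p.2.1) (fun p => p.1)
  have t3 := tri_split (Sfin n) hv (fun p => p.2.2.1) (fun p => p.2.2.2)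
  have hzero : ∑ p ∈ (Sfin n).filter (fun p => p.2.2.1 = p.2.2.2), hv p = 0 := by
    apply Finset.sum_eq_zero
    rintro ⟨a,b,x,y⟩ hp'
    simp only [Finset.mem_filter] at hp'
    have hxy : x = y := hp'.2
    dsimp only [hv]
    rw [← hxy]
    exact hp_diag _ _ _
  have hsplit : ∑ p ∈ (Sfin n).filter (fun p => p.2.1 = p.1), (Tsv p + hv p)
      = ∑ p ∈ (Sfin n).filter (fun p => p.2.1 = p.1), Tsv p
        + ∑ p ∈ (Sfin n).filter (fun p => p.2.1 = p.1), hv p :=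
    Finset.sum_add_distrib
  linarith

lemma sigA (m : ℕ) : (sig 3 m : ℚ) = ∑ p ∈ m.divisorsAntidiagonal, (p.2:ℚ)^3 := by
  rw [sig_cast, Nat.sum_divisorsAntidiagonal' (fun a b => (b:ℚ)^3)]

lemma sigB (m : ℕ) : (sig 5 m : ℚ) = ∑ p ∈ m.divisorsAntidiagonal, (p.2:ℚ)^5 := by
  rw [sig_cast, Nat.sum_divisorsAntidiagonal' (fun a b => (b:ℚ)^5)]

lemma flatten (n : ℕ) :
    ∑ n1 ∈ Finset.Ico 1 n,
      ((10:ℚ)*(n:ℚ)^2 - 55*(n:ℚ)*(n1:ℚ) + 66*(n1:ℚ)^2) * (sig 3 n1 : ℚ) * (sig 5 (n - n1) : ℚ)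
    = ∑ p ∈ Sfin n, Tfv p := by
  have step1 : ∀ n1 ∈ Finset.Ico 1 n,
      ((10:ℚ)*(n:ℚ)^2 - 55*(n:ℚ)*(n1:ℚ) + 66*(n1:ℚ)^2) * (sig 3 n1 : ℚ) * (sig 5 (n - n1) : ℚ)
      = ∑ pq ∈ n1.divisorsAntidiagonal ×ˢ (n - n1).divisorsAntidiagonal,
          ((10:ℚ)*(n:ℚ)^2 - 55*(n:ℚ)*(n1:ℚ) + 66*(n1:ℚ)^2) * (pq.1.2:ℚ)^3 * (pq.2.2:ℚ)^5 := by
    intro n1 _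
    rw [mul_assoc, sigA, sigB, Finset.sum_mul_sum, Finset.sum_product, Finset.mul_sum]
    apply Finset.sum_congr rfl
    intro p _
    rw [Finset.mul_sum]
    apply Finset.sum_congr rfl
    intro q _
    ring
  rw [Finset.sum_congr rfl step1, ← Finset.sum_sigma (Finset.Ico 1 n)
    (fun n1 => n1.divisorsAntidiagonal ×ˢ (n - n1).divisorsAntidiagonal)
    (fun q => ((10:ℚ)*(n:ℚ)^2 - 55*(n:ℚ)*(q.1:ℚ) + 66*(q.1:ℚ)^2) * (q.2.1.2:ℚ)^3 * (q.2.2.2:ℚ)^5)]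
  refine Finset.sum_nbij' (fun q => (q.2.1.1, q.2.2.1, q.2.1.2, q.2.2.2))
    (fun p => ⟨p.1 * p.2.2.1, ((p.1, p.2.2.1), (p.2.1, p.2.2.2))⟩) ?_ ?_ ?_ ?_ ?_
  · rintro ⟨n1, ⟨a, x⟩, ⟨b, y⟩⟩ hq
    simp only [Finset.mem_sigma, Finset.mem_product, Nat.mem_divisorsAntidiagonal,
      Finset.mem_Ico] at hq
    obtain ⟨⟨hn1, hn2⟩, ⟨hax, hax0⟩, ⟨hby, hby0⟩⟩ := hq
    dsimp only
    rw [mem_Sfin]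
    have ha : a ≠ 0 ∧ x ≠ 0 := by
      rw [← mul_ne_zero_iff]; rw [hax]; exact hax0
    have hb : b ≠ 0 ∧ y ≠ 0 := by
      rw [← mul_ne_zero_iff]; rw [hby]; exact hby0
    refine ⟨by omega, by omega, by omega, by omega, by omega⟩
  · rintro ⟨a, b, x, y⟩ hp'
    rw [mem_Sfin] at hp'
    obtain ⟨h1, h2, h3, h4, he⟩ := hp'
    dsimp only
    simp only [Finset.mem_sigma, Finset.mem_product, Nat.mem_divisorsAntidiagonal,
      Finset.mem_Ico]
    have hax : 1 ≤ a * x := Nat.mul_pos h1 h3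
    have hby : 1 ≤ b * y := Nat.mul_pos h2 h4
    refine ⟨⟨by omega, by omega⟩, ⟨trivial, by omega⟩, by omega, by omega⟩
  · rintro ⟨n1, ⟨a, x⟩, ⟨b, y⟩⟩ hq
    simp only [Finset.mem_sigma, Finset.mem_product, Nat.mem_divisorsAntidiagonal,
      Finset.mem_Ico] at hq
    obtain ⟨⟨hn1, hn2⟩, ⟨hax, hax0⟩, ⟨hby, hby0⟩⟩ := hq
    dsimp only
    rw [hax]
  · rintro ⟨a, b, x, y⟩ _
    rfl
  · rintro ⟨n1, ⟨a, x⟩, ⟨b, y⟩⟩ hq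
    simp only [Finset.mem_sigma, Finset.mem_product, Nat.mem_divisorsAntidiagonal,
      Finset.mem_Ico] at hq
    obtain ⟨⟨hn1, hn2⟩, ⟨hax, hax0⟩, ⟨hby, hby0⟩⟩ := hq
    dsimp only [Tfv]
    have hcn : (n:ℚ) = (a:ℚ)*(x:ℚ) + (b:ℚ)*(y:ℚ) := by
      have : a * x + b * y = n := by omega
      push_cast [← this]
      ring
    have hcn1 : (n1:ℚ) = (a:ℚ)*(x:ℚ) := by
      push_cast [← hax]
      ring
    rw [hcn, hcn1, Tf]
    ring

theorem convolution_identity_r1_3_r2_5_d_2 (n : ℕ) (hn : 1 ≤ n) :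
    ∑ n1 ∈ Finset.Ico 1 n,
        ((10 : ℚ) - 55 * ((n1 : ℚ) / (n : ℚ)) + 66 * ((n1 : ℚ) / (n : ℚ)) ^ 2) *
          (sig 3 n1 : ℚ) * (sig 5 (n - n1) : ℚ) =
      ((sig 3 n : ℚ) - (sig 5 n : ℚ)) / 24 := by
  have hn0 : (n:ℚ) ≠ 0 := by
    simp only [ne_eq, Nat.cast_eq_zero]
    omega
  have main := (flatten n).trans (keylemma n)
  have step : ∀ n1 ∈ Finset.Ico 1 n,
      ((10 : ℚ) - 55 * ((n1 : ℚ) / (n : ℚ)) + 66 * ((n1 : ℚ) / (n : ℚ)) ^ 2) *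
          (sig 3 n1 : ℚ) * (sig 5 (n - n1) : ℚ)
      = (((10:ℚ)*(n:ℚ)^2 - 55*(n:ℚ)*(n1:ℚ) + 66*(n1:ℚ)^2) * (sig 3 n1 : ℚ) * (sig 5 (n - n1) : ℚ))
          / (n:ℚ)^2 := by
    intro n1 _
    field_simp
  rw [Finset.sum_congr rfl step, ← Finset.sum_div, main]
  field_simp
end

section
/- Let r1, r2 be odd integers with r1 > 1 and r2 > 1, let d be a negative integer, and let n ∈ ℕ. Then, as ε → 0 through nonzero complex values, the quantity Γ(1 + d − ε) · [ (2π)^{r2+ε}·ζ(1 − r2 − ε)/(Γ(1 + d + r1 + r2 + ε)·Γ(1 + d + r2)) + ζ(1 + r2 + ε)·n^{−r2−ε}/((2π)^{r2+ε}·Γ(1 + d − ε)·Γ(1 + d + r1)) ] (which equals Γ(1 + d − ε)·Z^{(r1+ε, r2+ε)}_{d−ε}) converges to (−1)^{d+1}·(2π)^{r2}·ζ'(1 − r2)/(Γ(1 + d + r2)·Γ(1 + d + r1 + r2)·Γ(−d)) + (2π)^{−r2}·ζ(1 + r2)·n^{−r2}/Γ(1 + d + r1), where ζ' denotes the derivative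 of the Riemann zeta function. -/
open Real Filter Topology

noncomputable section

lemma aux_ne_int {ε : ℂ} (h0 : ε ≠ 0) (h1 : ‖ε‖ < 1) (k : ℤ) : ε ≠ (k : ℂ) := by
  rintro rfl
  rcases eq_or_ne k 0 with rfl | hk
  · simp at h0
  · have h2 : (1:ℝ) ≤ ‖(k:ℂ)‖ := by
      rw [Complex.norm_intCast]
      exact_mod_cast Int.one_le_abs hk
    linarith

lemma gamma_ne' {z : ℂ} (h : ∀ k : ℤ, z ≠ (k:ℂ)) : Complex.Gamma z ≠ 0 :=
  Complex.Gamma_ne_zero (fun m => by simpa using h (-m))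

lemma ccos_int (k : ℤ) : Complex.cos ((k : ℂ) * (π:ℂ)) = (-1) ^ k := by
  have h : ((k:ℂ) * (π:ℂ)) = ((k * π : ℝ) : ℂ) := by push_cast; ring
  rw [h, ← Complex.ofReal_cos]
  have h2 : Real.cos ((k:ℝ) * π) = (-1)^k := by
    simpa using Real.cos_add_int_mul_pi 0 k
  rw [h2]; push_cast; ring

lemma csin_shift (k : ℤ) (x : ℂ) :
    Complex.sin ((k:ℂ) * (π:ℂ) - x) = -((-1:ℂ)^k * Complex.sin x) := by
  rw [Complex.sin_sub, Complex.sin_int_mul_pi, ccos_int]; ring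

lemma csin_ne {ε : ℂ} (h0 : ε ≠ 0) (h1 : ‖ε‖ < 1) : Complex.sin ((π:ℂ) * ε) ≠ 0 := by
  intro h
  rw [Complex.sin_eq_zero_iff] at h
  obtain ⟨k, hk⟩ := h
  have hπ : (π:ℂ) ≠ 0 := Complex.ofReal_ne_zero.2 Real.pi_ne_zero
  exact aux_ne_int h0 h1 k (mul_left_cancel₀ hπ (by rw [hk]; ring))

lemma tendsto_add_const (a : ℂ) : Tendsto (fun ε : ℂ => a + ε) (𝓝[≠] 0) (𝓝 a) := by
  have h : Tendsto (fun ε : ℂ => a + ε) (𝓝 (0:ℂ)) (𝓝 (a + 0)) :=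
    (continuous_const.add continuous_id).tendsto 0
  simpa using h.mono_left nhdsWithin_le_nhds

lemma tendsto_Gamma_add {z : ℂ} (h : ∀ m : ℕ, z ≠ -(m:ℂ)) :
    Tendsto (fun ε : ℂ => Complex.Gamma (z + ε)) (𝓝[≠] 0) (𝓝 (Complex.Gamma z)) :=
  (Complex.differentiableAt_Gamma z h).continuousAt.tendsto.comp (tendsto_add_const z)

lemma int_nonpole {a : ℤ} (ha : 0 < a) (m : ℕ) : ((a:ℂ)) ≠ -(m:ℂ) := by
  intro h
  have h2 : ((a:ℤ):ℂ) = ((-(m:ℤ) :ℤ):ℂ) := by push_cast; exact h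
  have := Int.cast_injective h2
  omega

lemma intGamma_ne {a : ℤ} (ha : 0 < a) : Complex.Gamma ((a:ℂ)) ≠ 0 :=
  Complex.Gamma_ne_zero (int_nonpole ha)

lemma intGamma_zero {a : ℤ} (ha : a ≤ 0) : Complex.Gamma ((a:ℂ)) = 0 := by
  have h : (a:ℂ) = -(((-a).toNat : ℕ):ℂ) := by
    have h2 : ((-a).toNat : ℤ) = -a := Int.toNat_of_nonneg (by omega)
    have h3 := congrArg (Int.cast : ℤ → ℂ) h2
    push_cast at h3
    linear_combination h3
  rw [h]; exact Complex.Gamma_neg_nat_eq_zero _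

lemma tendsto_sin_div : Tendsto (fun ε : ℂ => (π:ℂ) * ε / Complex.sin ((π:ℂ)*ε)) (𝓝[≠] 0) (𝓝 1) := by
  have hπ : (π:ℂ) ≠ 0 := Complex.ofReal_ne_zero.2 Real.pi_ne_zero
  have hd := Complex.hasDerivAt_sin 0
  rw [hasDerivAt_iff_tendsto_slope] at hd
  have hslope : slope Complex.sin 0 = fun z : ℂ => Complex.sin z / z := by
    funext z; rw [slope_def_field]; simp
  rw [hslope, Complex.cos_zero] at hd
  have hm : Tendsto (fun ε : ℂ => (π:ℂ)*ε) (𝓝[≠] 0) (𝓝[≠] 0) := by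
    apply tendsto_nhdsWithin_of_tendsto_nhds_of_eventually_within
    · simpa using ((continuous_mul_left (π:ℂ)).tendsto (0:ℂ)).mono_left nhdsWithin_le_nhds
    · filter_upwards [self_mem_nhdsWithin] with x hx
      simpa using mul_ne_zero hπ (by simpa using hx)
  have h2 := (hd.comp hm).inv₀ one_ne_zero
  simpa [inv_div, Function.comp] using h2

lemma eventually_small : ∀ᶠ ε : ℂ in 𝓝[≠] (0:ℂ), ‖ε‖ < 1 := by
  have h : ∀ᶠ ε : ℂ in 𝓝 (0:ℂ), ‖ε‖ < 1 := by
    filter_upwards [Metric.ball_mem_nhds (0:ℂ) one_pos] with x hx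
    simpa using mem_ball_zero_iff.1 hx
  exact h.filter_mono nhdsWithin_le_nhds

lemma tendsto_eps_Gamma (d : ℤ) (hd : d < 0) :
    Tendsto (fun ε : ℂ => ε * Complex.Gamma (1 + (d:ℂ) - ε)) (𝓝[≠] 0)
      (𝓝 ((-1:ℂ)^d / Complex.Gamma (-(d:ℂ)))) := by
  have hπ : (π:ℂ) ≠ 0 := Complex.ofReal_ne_zero.2 Real.pi_ne_zero
  have hdpos : 0 < -d := by omega
  have hGd : Complex.Gamma (-(d:ℂ)) ≠ 0 := by
    have h := intGamma_ne hdpos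
    rwa [show (((-d:ℤ)):ℂ) = -(d:ℂ) by push_cast; ring] at h
  have hmodel : Tendsto (fun ε : ℂ =>
      (-1:ℂ)^d * ((π:ℂ)*ε / Complex.sin ((π:ℂ)*ε)) / Complex.Gamma (-(d:ℂ) + ε)) (𝓝[≠] 0)
      (𝓝 ((-1:ℂ)^d / Complex.Gamma (-(d:ℂ)))) := by
    have hg : Tendsto (fun ε : ℂ => Complex.Gamma (-(d:ℂ) + ε)) (𝓝[≠] 0)
        (𝓝 (Complex.Gamma (-(d:ℂ)))) := by
      apply tendsto_Gamma_add
      intro m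
      rw [show -(d:ℂ) = ((-d:ℤ):ℂ) by push_cast; ring]
      exact int_nonpole hdpos m
    have h2 := ((tendsto_const_nhds : Tendsto (fun _ : ℂ => ((-1:ℂ))^d) (𝓝[≠] 0) _).mul tendsto_sin_div).div hg hGd
    rw [mul_one] at h2; exact h2
  refine hmodel.congr' ?_
  filter_upwards [eventually_small, self_mem_nhdsWithin] with ε h1 h0'
  have h0 : ε ≠ 0 := h0'
  have hne : ∀ k : ℤ, ε ≠ (k:ℂ) := aux_ne_int h0 h1
  have hsin : Complex.sin ((π:ℂ)*ε) ≠ 0 := csin_ne h0 h1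
  have hG : Complex.Gamma (-(d:ℂ) + ε) ≠ 0 := by
    apply gamma_ne'
    intro k hk
    exact hne (k + d) (by push_cast; linear_combination hk)
  have hrefl := Complex.Gamma_mul_Gamma_one_sub (1+(d:ℂ)-ε)
  rw [show (1:ℂ) - (1+(d:ℂ)-ε) = -(d:ℂ)+ε by ring] at hrefl
  rw [show (π:ℂ)*(1+(d:ℂ)-ε) = (((1+d : ℤ)):ℂ)*(π:ℂ) - (π:ℂ)*ε by push_cast; ring,
    csin_shift] at hrefl
  have hm1 : ((-1:ℂ))^(1+d) = -((-1:ℂ))^d := by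
    rw [zpow_add₀ (by norm_num : (-1:ℂ) ≠ 0)]; simp
  rw [hm1] at hrefl
  have hsq : ((-1:ℂ))^d * ((-1:ℂ))^d = 1 := by
    rw [← zpow_add₀ (by norm_num : (-1:ℂ) ≠ 0)]
    exact Even.neg_one_zpow ⟨d, rfl⟩
  have hz : ((-1:ℂ))^d ≠ 0 := by
    intro h; rw [h, mul_zero] at hsq; exact one_ne_zero hsq.symm
  rw [div_eq_iff hG, mul_assoc ε, hrefl]
  field_simp
  linear_combination hsq

lemma tendsto_zeta_div (r2 : ℤ) (ho2 : Odd r2) (hr2 : 1 < r2) :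
    Tendsto (fun ε : ℂ => riemannZeta (1 - (r2:ℂ) - ε) / ε) (𝓝[≠] 0)
      (𝓝 (-deriv riemannZeta (1 - (r2:ℂ)))) := by
  have hne1 : (1:ℂ) - (r2:ℂ) ≠ 1 := by
    intro h
    have h2 : ((r2:ℤ):ℂ) = ((0:ℤ):ℂ) := by push_cast; linear_combination -h
    have h3 : r2 = 0 := Int.cast_injective h2
    omega
  have hzero : riemannZeta (1 - (r2:ℂ)) = 0 := by
    obtain ⟨k, hk⟩ := ho2
    have hk1 : 1 ≤ k := by omega
    have hjk : (((k-1).toNat : ℤ)) = k - 1 := Int.toNat_of_nonneg (by omega)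
    have hr : (r2:ℤ) = 2*((k-1).toNat : ℤ) + 3 := by omega
    have hcast : (1:ℂ) - (r2:ℂ) = -2 * ((((k-1).toNat:ℕ):ℂ) + 1) := by
      have h4 := congrArg (Int.cast : ℤ → ℂ) hr
      push_cast at h4
      linear_combination -h4
    rw [hcast]
    exact riemannZeta_neg_two_mul_nat_add_one _
  have hζ : HasDerivAt riemannZeta (deriv riemannZeta (1-(r2:ℂ))) (1-(r2:ℂ)-0) := by
    simpa using (differentiableAt_riemannZeta hne1).hasDerivAt
  have hd1 : HasDerivAt (fun ε : ℂ => 1 - (r2:ℂ) - ε) (-1) 0 := by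
    simpa using ((hasDerivAt_id (0:ℂ)).const_sub (1 - (r2:ℂ)))
  have hcomp : HasDerivAt (fun ε : ℂ => riemannZeta (1 - (r2:ℂ) - ε))
      (-deriv riemannZeta (1-(r2:ℂ))) 0 := by
    have h5 := hζ.comp (0:ℂ) hd1
    rw [mul_neg_one] at h5; exact h5
  rw [hasDerivAt_iff_tendsto_slope] at hcomp
  have hsl : slope (fun ε : ℂ => riemannZeta (1 - (r2:ℂ) - ε)) 0
      = fun ε : ℂ => riemannZeta (1 - (r2:ℂ) - ε) / ε := by
    funext z; rw [slope_def_field]; simp [hzero]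
  rwa [hsl] at hcomp

lemma tendsto_const_sub (a : ℂ) : Tendsto (fun ε : ℂ => a - ε) (𝓝[≠] 0) (𝓝 a) := by
  have h : Tendsto (fun ε : ℂ => a - ε) (𝓝 (0:ℂ)) (𝓝 (a - 0)) :=
    (continuous_const.sub continuous_id).tendsto 0
  simpa using h.mono_left nhdsWithin_le_nhds

lemma second_term (r1 r2 : ℤ) (hr2 : 1 < r2) (d : ℤ) (n : ℕ) (hn : 0 < n) :
    Tendsto (fun ε : ℂ =>
        Complex.Gamma (1 + (d:ℂ) - ε) *
          (riemannZeta (1 + (r2:ℂ) + ε) * (n:ℂ) ^ (-(r2:ℂ) - ε) /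
            ((2 * (π:ℂ)) ^ ((r2:ℂ) + ε) * Complex.Gamma (1 + (d:ℂ) - ε) *
              Complex.Gamma (1 + (d:ℂ) + (r1:ℂ)))))
      (𝓝[≠] 0)
      (𝓝 ((2 * (π:ℂ)) ^ (-r2 : ℤ) * riemannZeta (1 + (r2:ℂ)) * (n:ℂ) ^ (-r2 : ℤ) /
            Complex.Gamma (1 + (d:ℂ) + (r1:ℂ)))) := by
  have h2π : (2 * (π:ℂ)) ≠ 0 := by
    simp [Complex.ofReal_ne_zero, Real.pi_ne_zero]
  have hn0 : (n:ℂ) ≠ 0 := Nat.cast_ne_zero.2 hn.ne'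
  rcases eq_or_ne (Complex.Gamma (1 + (d:ℂ) + (r1:ℂ))) 0 with hΓ | hΓ
  · rw [hΓ]
    simpa using (tendsto_const_nhds : Tendsto (fun _ : ℂ => (0:ℂ)) (𝓝[≠] 0) _)
  · have Tζ : Tendsto (fun ε : ℂ => riemannZeta (1 + (r2:ℂ) + ε)) (𝓝[≠] 0)
        (𝓝 (riemannZeta (1 + (r2:ℂ)))) := by
      refine (differentiableAt_riemannZeta ?_).continuousAt.tendsto.comp
        (tendsto_add_const (1 + (r2:ℂ)))
      intro h
      have h2 : ((r2:ℤ):ℂ) = ((0:ℤ):ℂ) := by push_cast; linear_combination h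
      have h3 : r2 = 0 := Int.cast_injective h2
      omega
    have Tn : Tendsto (fun ε : ℂ => (n:ℂ) ^ (-(r2:ℂ) - ε)) (𝓝[≠] 0)
        (𝓝 ((n:ℂ) ^ (-(r2:ℂ)))) := by
      have h := (continuousAt_const_cpow (b := -(r2:ℂ)) hn0).tendsto.comp
        (tendsto_const_sub (-(r2:ℂ)))
      exact h
    have TP : Tendsto (fun ε : ℂ => (2 * (π:ℂ)) ^ ((r2:ℂ) + ε)) (𝓝[≠] 0)
        (𝓝 ((2 * (π:ℂ)) ^ ((r2:ℂ)))) := by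
      have h := (continuousAt_const_cpow (b := (r2:ℂ)) h2π).tendsto.comp
        (tendsto_add_const ((r2:ℂ)))
      exact h
    have hP0 : (2 * (π:ℂ)) ^ ((r2:ℂ)) ≠ 0 := by
      rw [show ((r2:ℤ):ℂ) = ((r2:ℤ):ℂ) from rfl, Complex.cpow_intCast]
      exact zpow_ne_zero _ h2π
    have T := (Tζ.mul Tn).div
      (TP.mul (tendsto_const_nhds : Tendsto (fun _ : ℂ => Complex.Gamma (1 + (d:ℂ) + (r1:ℂ))) (𝓝[≠] 0) _))
      (mul_ne_zero hP0 hΓ)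
    have hval : riemannZeta (1 + (r2:ℂ)) * (n:ℂ) ^ (-(r2:ℂ)) /
        ((2 * (π:ℂ)) ^ ((r2:ℂ)) * Complex.Gamma (1 + (d:ℂ) + (r1:ℂ)))
        = (2 * (π:ℂ)) ^ (-r2 : ℤ) * riemannZeta (1 + (r2:ℂ)) * (n:ℂ) ^ (-r2 : ℤ) /
            Complex.Gamma (1 + (d:ℂ) + (r1:ℂ)) := by
      rw [show (-(r2:ℂ)) = ((-r2:ℤ):ℂ) by push_cast; ring, Complex.cpow_intCast,
        Complex.cpow_intCast, zpow_neg, zpow_neg]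
      field_simp
    rw [hval] at T
    refine T.congr' ?_
    filter_upwards [eventually_small, self_mem_nhdsWithin] with ε h1 h0'
    have h0 : ε ≠ 0 := h0'
    have hne : ∀ k : ℤ, ε ≠ (k:ℂ) := aux_ne_int h0 h1
    have hG : Complex.Gamma (1 + (d:ℂ) - ε) ≠ 0 := by
      apply gamma_ne'
      intro k hk
      exact hne (1 + d - k) (by push_cast; linear_combination -hk)
    have hPe : (2 * (π:ℂ)) ^ ((r2:ℂ) + ε) ≠ 0 := by
      rw [Complex.cpow_def_of_ne_zero h2π]
      exact Complex.exp_ne_zero _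
    simp only [Pi.div_apply]
    field_simp

lemma first_term (r1 r2 : ℤ) (ho2 : Odd r2) (hr1 : 1 < r1) (hr2 : 1 < r2) (d : ℤ) (hd : d < 0) :
    Tendsto (fun ε : ℂ =>
        Complex.Gamma (1 + (d:ℂ) - ε) *
          ((2 * (π:ℂ)) ^ ((r2:ℂ) + ε) * riemannZeta (1 - (r2:ℂ) - ε) /
            (Complex.Gamma (1 + (d:ℂ) + (r1:ℂ) + (r2:ℂ) + ε) *
              Complex.Gamma (1 + (d:ℂ) + (r2:ℂ)))))
      (𝓝[≠] 0)
      (𝓝 ((-1:ℂ) ^ (d + 1) * (2 * (π:ℂ)) ^ (r2:ℤ) * deriv riemannZeta (1 - (r2:ℂ)) /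
            (Complex.Gamma (1 + (d:ℂ) + (r2:ℂ)) *
              Complex.Gamma (1 + (d:ℂ) + (r1:ℂ) + (r2:ℂ)) *
              Complex.Gamma (-(d:ℂ))))) := by
  have h2π : (2 * (π:ℂ)) ≠ 0 := by
    simp [Complex.ofReal_ne_zero, Real.pi_ne_zero]
  rcases le_or_gt (1 + d + r2) 0 with hcase | hcase
  · have hz : Complex.Gamma (1 + (d:ℂ) + (r2:ℂ)) = 0 := by
      have h := intGamma_zero hcase
      rwa [show (((1+d+r2:ℤ)):ℂ) = 1+(d:ℂ)+(r2:ℂ) by push_cast; ring] at h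
    rw [hz]
    simpa using (tendsto_const_nhds : Tendsto (fun _ : ℂ => (0:ℂ)) (𝓝[≠] 0) _)
  · have hsum : 0 < 1 + d + r1 + r2 := by omega
    have hg2 : Complex.Gamma (1 + (d:ℂ) + (r2:ℂ)) ≠ 0 := by
      have h := intGamma_ne hcase
      rwa [show (((1+d+r2:ℤ)):ℂ) = 1+(d:ℂ)+(r2:ℂ) by push_cast; ring] at h
    have hgs : Complex.Gamma (1 + (d:ℂ) + (r1:ℂ) + (r2:ℂ)) ≠ 0 := by
      have h := intGamma_ne hsum
      rwa [show (((1+d+r1+r2:ℤ)):ℂ) = 1+(d:ℂ)+(r1:ℂ)+(r2:ℂ) by push_cast; ring] at h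
    have hGd : Complex.Gamma (-(d:ℂ)) ≠ 0 := by
      have h := intGamma_ne (show (0:ℤ) < -d by omega)
      rwa [show (((-d:ℤ)):ℂ) = -(d:ℂ) by push_cast; ring] at h
    have TG : Tendsto (fun ε : ℂ => Complex.Gamma (1 + (d:ℂ) + (r1:ℂ) + (r2:ℂ) + ε)) (𝓝[≠] 0)
        (𝓝 (Complex.Gamma (1 + (d:ℂ) + (r1:ℂ) + (r2:ℂ)))) := by
      apply tendsto_Gamma_add
      intro m
      rw [show 1+(d:ℂ)+(r1:ℂ)+(r2:ℂ) = (((1+d+r1+r2:ℤ)):ℂ) by push_cast; ring]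
      exact int_nonpole hsum m
    have TP : Tendsto (fun ε : ℂ => (2 * (π:ℂ)) ^ ((r2:ℂ) + ε)) (𝓝[≠] 0)
        (𝓝 ((2 * (π:ℂ)) ^ ((r2:ℂ)))) := by
      have h := (continuousAt_const_cpow (b := (r2:ℂ)) h2π).tendsto.comp
        (tendsto_add_const ((r2:ℂ)))
      exact h
    have T := ((tendsto_eps_Gamma d hd).mul (tendsto_zeta_div r2 ho2 hr2)).mul
      (TP.div (TG.mul (tendsto_const_nhds :
        Tendsto (fun _ : ℂ => Complex.Gamma (1 + (d:ℂ) + (r2:ℂ))) (𝓝[≠] 0) _))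
        (mul_ne_zero hgs hg2))
    have hval : (-1:ℂ)^d / Complex.Gamma (-(d:ℂ)) * (-deriv riemannZeta (1 - (r2:ℂ))) *
        ((2 * (π:ℂ)) ^ ((r2:ℂ)) /
          (Complex.Gamma (1 + (d:ℂ) + (r1:ℂ) + (r2:ℂ)) * Complex.Gamma (1 + (d:ℂ) + (r2:ℂ))))
        = (-1:ℂ) ^ (d + 1) * (2 * (π:ℂ)) ^ (r2:ℤ) * deriv riemannZeta (1 - (r2:ℂ)) /
            (Complex.Gamma (1 + (d:ℂ) + (r2:ℂ)) *
              Complex.Gamma (1 + (d:ℂ) + (r1:ℂ) + (r2:ℂ)) *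
              Complex.Gamma (-(d:ℂ))) := by
      rw [Complex.cpow_intCast, show (-1:ℂ)^(d+1) = -(-1:ℂ)^d by
        rw [zpow_add₀ (by norm_num : (-1:ℂ) ≠ 0)]; ring]
      field_simp
    rw [hval] at T
    refine T.congr' ?_
    filter_upwards [self_mem_nhdsWithin] with ε h0'
    have h0 : ε ≠ 0 := h0'
    have hq : riemannZeta (1 - (r2:ℂ) - ε) / ε * ε = riemannZeta (1 - (r2:ℂ) - ε) :=
      div_mul_cancel₀ _ h0
    simp only [Pi.div_apply]
    linear_combination ((2 * (π:ℂ)) ^ ((r2:ℂ) + ε) /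
      (Complex.Gamma (1 + (d:ℂ) + (r1:ℂ) + (r2:ℂ) + ε) * Complex.Gamma (1 + (d:ℂ) + (r2:ℂ))) *
      Complex.Gamma (1 + (d:ℂ) - ε)) * hq

/-- Limit of `Γ(1+d−ε)·Z^{(r1+ε, r2+ε)}_{d−ε}` as `ε → 0` through nonzero complex values. -/
theorem boundary_term_regularization
    (r1 r2 : ℤ) (ho1 : Odd r1) (ho2 : Odd r2) (hr1 : 1 < r1) (hr2 : 1 < r2)
    (d : ℤ) (hd : d < 0) (n : ℕ) (hn : 0 < n) :
    Tendsto (fun ε : ℂ =>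
        Complex.Gamma (1 + (d : ℂ) - ε) *
          ((2 * (π : ℂ)) ^ ((r2 : ℂ) + ε) * riemannZeta (1 - (r2 : ℂ) - ε) /
              (Complex.Gamma (1 + (d : ℂ) + (r1 : ℂ) + (r2 : ℂ) + ε) *
                Complex.Gamma (1 + (d : ℂ) + (r2 : ℂ))) +
            riemannZeta (1 + (r2 : ℂ) + ε) * (n : ℂ) ^ (-(r2 : ℂ) - ε) /
              ((2 * (π : ℂ)) ^ ((r2 : ℂ) + ε) * Complex.Gamma (1 + (d : ℂ) - ε) *
                Complex.Gamma (1 + (d : ℂ) + (r1 : ℂ)))))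
      (𝓝[≠] 0)
      (𝓝 ((-1 : ℂ) ^ (d + 1) * (2 * (π : ℂ)) ^ (r2 : ℤ) *
            deriv riemannZeta (1 - (r2 : ℂ)) /
            (Complex.Gamma (1 + (d : ℂ) + (r2 : ℂ)) *
              Complex.Gamma (1 + (d : ℂ) + (r1 : ℂ) + (r2 : ℂ)) *
              Complex.Gamma (-(d : ℂ))) +
          (2 * (π : ℂ)) ^ (-r2 : ℤ) * riemannZeta (1 + (r2 : ℂ)) * (n : ℂ) ^ (-r2 : ℤ) /
            Complex.Gamma (1 + (d : ℂ) + (r1 : ℂ)))) := by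
  have h := (first_term r1 r2 ho2 hr1 hr2 d hd).add (second_term r1 r2 hr2 d n hn)
  exact h.congr (fun ε => by ring)

end
end
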